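/- arXiv:2111.09291 — 7 statements merged into one kernel-verified Lean document; each statement's English description precedes it below -/
import Mathlib

section
/- Let u : ℝ → ℂ be continuously differentiable with u(α) ≠ 0 for every α ∈ ℝ. Then the functions 1/|u| and ω := u/|u| are differentiable, and for every α ∈ ℝ one has the decomposition ω(α)·(1/u)'(α) = (1/|u|)'(α) + ω(α)·(1/|u(α)|)·(d/dα)(conj(ω))(α), where (1/|u|)'(α) is real and ω(α)·(1/|u(α)|)·(d/dα)(conj(ω))(α) is purely imaginary; in particular Re(ω(α)·(1/u)'(α)) = (1/|u|)'(α) and |(1/u)'(α)|² = |(1/|u|)'(α)|² + |u(α)|^{-2}·|(d/dα)ω(α)|² for every α. Consequently, ‖(1/|u|)'‖_{L²(ℝ)} + ‖|u|^{-1}·ω'‖_{L²(ℝ)} ≤ 2‖(1/u)'‖_{L²(ℝ)}. -/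
open MeasureTheory Complex

lemma stmt0_norm_deriv (u : ℝ → ℂ) (hu : Differentiable ℝ u) (hne : ∀ α : ℝ, u α ≠ 0) (α : ℝ) :
    HasDerivAt (fun x : ℝ => ‖u x‖)
      (((starRingEnd ℂ) (u α) * deriv u α).re / ‖u α‖) α := by
  have h1 : HasDerivAt u (deriv u α) α := (hu α).hasDerivAt
  have hre : HasDerivAt (fun x => (u x).re) ((deriv u α).re) α :=
    Complex.reCLM.hasFDerivAt.comp_hasDerivAt α h1
  have him : HasDerivAt (fun x => (u x).im) ((deriv u α).im) α :=
    Complex.imCLM.hasFDerivAt.comp_hasDerivAt α h1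
  have hn : HasDerivAt (fun x => Complex.normSq (u x))
      (2 * ((starRingEnd ℂ) (u α) * deriv u α).re) α := by
    have := (hre.mul hre).add (him.mul him)
    simp only [Pi.add_def, Pi.mul_def] at this
    simp only [Complex.normSq_apply]
    refine this.congr_deriv ?_
    simp [Complex.mul_re, Complex.conj_re, Complex.conj_im]
    ring
  have hns : Complex.normSq (u α) ≠ 0 := by
    simpa [Complex.normSq_eq_zero] using hne α
  have := hn.sqrt hns
  have habs : ∀ z : ℂ, Real.sqrt (Complex.normSq z) = ‖z‖ := fun z => by
    rw [Complex.norm_def]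
  simp only [habs] at this
  convert this using 1
  have hr : ‖u α‖ ≠ 0 := by simpa using hne α
  field_simp

lemma stmt0_alg1 (z w : ℂ) (r s : ℝ) (hz : z ≠ 0) (hr : ((r:ℝ):ℂ) ≠ 0)
    (h1 : (((r:ℝ):ℂ))^2 = z * (starRingEnd ℂ) z)
    (h2 : (((s:ℝ):ℂ)) * 2 = (starRingEnd ℂ) z * w + z * (starRingEnd ℂ) w) :
    (z / ((r:ℝ):ℂ)) * (-w / z^2)
      = ((( -(s/r) / r^2 : ℝ)):ℂ)
        + (z / (((r:ℝ):ℂ))^2) *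
          (starRingEnd ℂ) ((w * ((r:ℝ):ℂ) - z * (((s/r : ℝ)):ℂ)) / (((r:ℝ):ℂ))^2) := by
  simp only [map_div₀, map_mul, map_sub, map_pow, Complex.conj_ofReal]
  push_cast
  field_simp
  linear_combination (-((r:ℂ))^2*w - (s:ℂ)*z) * h1 + (z*((r:ℂ))^2) * h2

lemma stmt0_alg2 (z w : ℂ) (r s : ℝ) (hr : ((r:ℝ):ℂ) ≠ 0)
    (h1 : (((r:ℝ):ℂ))^2 = z * (starRingEnd ℂ) z) :
    (z / (((r:ℝ):ℂ))^2) *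
          (starRingEnd ℂ) ((w * ((r:ℝ):ℂ) - z * (((s/r : ℝ)):ℂ)) / (((r:ℝ):ℂ))^2)
      = (z * (starRingEnd ℂ) w - ((s:ℝ):ℂ)) / (((r:ℝ):ℂ))^3 := by
  simp only [map_div₀, map_mul, map_sub, map_pow, Complex.conj_ofReal]
  push_cast
  field_simp
  linear_combination (s:ℂ) * h1

lemma stmt0_sq_decomp (a : ℝ) (E : ℂ) (h : E.re = 0) :
    ‖(a : ℂ) + E‖ ^ 2 = |a| ^ 2 + ‖E‖ ^ 2 := by
  rw [Complex.sq_norm, Complex.sq_norm]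
  simp [Complex.normSq_apply, Complex.add_re, Complex.add_im, Complex.ofReal_re,
    Complex.ofReal_im, h, sq_abs]
  ring

/-- For `u : ℝ → ℂ` continuously differentiable and nowhere vanishing,
the functions `1/|u|` and `ω = u/|u|` are differentiable, the derivative of `1/u`
(multiplied by `ω`) decomposes into a real part `(1/|u|)'` and a purely imaginary part
`ω · |u|⁻¹ · (conj ω)'`, with the pointwise Pythagorean identity, and the `L²` bound
`‖(1/|u|)'‖₂ + ‖|u|⁻¹ ω'‖₂ ≤ 2‖(1/u)'‖₂`. -/
theorem statement0 (u : ℝ → ℂ) (hu : ContDiff ℝ 1 u) (hne : ∀ α : ℝ, u α ≠ 0) :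
    Differentiable ℝ (fun α : ℝ => (‖u α‖)⁻¹) ∧
    Differentiable ℝ (fun α : ℝ => u α / (‖u α‖ : ℂ)) ∧
    (∀ α : ℝ,
      (u α / (‖u α‖ : ℂ)) * deriv (fun x : ℝ => (u x)⁻¹) α
        = ((deriv (fun x : ℝ => (‖u x‖)⁻¹) α : ℝ) : ℂ)
          + (u α / (‖u α‖ : ℂ)) * ((‖u α‖ : ℂ))⁻¹
              * deriv (fun x : ℝ => (starRingEnd ℂ) (u x / (‖u x‖ : ℂ))) α) ∧
    (∀ α : ℝ,
      ((u α / (‖u α‖ : ℂ)) * ((‖u α‖ : ℂ))⁻¹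
          * deriv (fun x : ℝ => (starRingEnd ℂ) (u x / (‖u x‖ : ℂ))) α).re = 0) ∧
    (∀ α : ℝ,
      ((u α / (‖u α‖ : ℂ)) * deriv (fun x : ℝ => (u x)⁻¹) α).re
        = deriv (fun x : ℝ => (‖u x‖)⁻¹) α) ∧
    (∀ α : ℝ,
      ‖deriv (fun x : ℝ => (u x)⁻¹) α‖ ^ 2
        = |deriv (fun x : ℝ => (‖u x‖)⁻¹) α| ^ 2
          + ((‖u α‖)⁻¹) ^ 2 * ‖deriv (fun x : ℝ => u x / (‖u x‖ : ℂ)) α‖ ^ 2) ∧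
    eLpNorm (deriv (fun x : ℝ => (‖u x‖)⁻¹)) 2 volume
      + eLpNorm (fun α : ℝ => (‖u α‖)⁻¹ • deriv (fun x : ℝ => u x / (‖u x‖ : ℂ)) α) 2 volume
      ≤ 2 * eLpNorm (deriv (fun x : ℝ => (u x)⁻¹)) 2 volume := by
  have hd : Differentiable ℝ u := hu.differentiable one_ne_zero
  have hr0 : ∀ α : ℝ, ‖u α‖ ≠ 0 := fun α => by simpa using hne α
  have hrC : ∀ α : ℝ, ((‖u α‖ : ℝ) : ℂ) ≠ 0 := fun α => by
    simpa using hr0 α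
  -- derivative of the norm
  have hN : ∀ α : ℝ, HasDerivAt (fun x : ℝ => ‖u x‖)
      (((starRingEnd ℂ) (u α) * deriv u α).re / ‖u α‖) α :=
    stmt0_norm_deriv u hd hne
  -- derivative of 1/‖u‖
  have hNi : ∀ α : ℝ, HasDerivAt (fun x : ℝ => (‖u x‖)⁻¹)
      (-(((starRingEnd ℂ) (u α) * deriv u α).re / ‖u α‖) / (‖u α‖) ^ 2) α :=
    fun α => (hN α).inv (hr0 α)
  -- derivative of 1/u
  have hUi : ∀ α : ℝ, HasDerivAt (fun x : ℝ => (u x)⁻¹)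
      (-(deriv u α) / (u α) ^ 2) α := fun α => by
    have := (hasDerivAt_const α (1 : ℂ)).div (hd α).hasDerivAt (hne α)
    simpa only [Pi.div_def, one_div, zero_mul, one_mul, zero_sub, neg_div] using this
  -- derivative of the complexified norm
  have hNc : ∀ α : ℝ, HasDerivAt (fun x : ℝ => ((‖u x‖ : ℝ) : ℂ))
      ((((((starRingEnd ℂ) (u α) * deriv u α).re / ‖u α‖) : ℝ) : ℂ)) α :=
    fun α => (hN α).ofReal_comp
  -- derivative of ω = u/‖u‖
  have hW : ∀ α : ℝ, HasDerivAt (fun x : ℝ => u x / (‖u x‖ : ℂ))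
      ((deriv u α * (‖u α‖ : ℂ)
          - u α * (((((starRingEnd ℂ) (u α) * deriv u α).re / ‖u α‖) : ℝ) : ℂ))
        / ((‖u α‖ : ℂ)) ^ 2) α :=
    fun α => ((hd α).hasDerivAt.div (hNc α) (hrC α))
  -- derivative of conj ω
  have hWc : ∀ α : ℝ, HasDerivAt (fun x : ℝ => (starRingEnd ℂ) (u x / (‖u x‖ : ℂ)))
      ((starRingEnd ℂ) ((deriv u α * (‖u α‖ : ℂ)
          - u α * (((((starRingEnd ℂ) (u α) * deriv u α).re / ‖u α‖) : ℝ) : ℂ))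
        / ((‖u α‖ : ℂ)) ^ 2)) α := by
    intro α
    exact Complex.conjCLE.toContinuousLinearMap.hasFDerivAt.comp_hasDerivAt α (hW α)
  -- algebraic relations
  have h1 : ∀ α : ℝ, ((‖u α‖ : ℂ)) ^ 2 = u α * (starRingEnd ℂ) (u α) := fun α => by
    rw [Complex.mul_conj, Complex.normSq_eq_norm_sq]
    push_cast
    ring
  have h2 : ∀ α : ℝ, ((((starRingEnd ℂ) (u α) * deriv u α).re : ℝ) : ℂ) * 2
      = (starRingEnd ℂ) (u α) * deriv u α + u α * (starRingEnd ℂ) (deriv u α) := fun α => by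
    have h := Complex.add_conj ((starRingEnd ℂ) (u α) * deriv u α)
    simp only [map_mul, Complex.conj_conj] at h
    rw [h]
    push_cast
    ring
  have hmc : ∀ a c : ℂ, a / c * c⁻¹ = a / c ^ 2 := fun a c => by
    rw [div_eq_mul_inv, div_eq_mul_inv, mul_assoc, ← mul_inv, ← sq]
  -- part (iii)
  have hIII : ∀ α : ℝ,
      (u α / (‖u α‖ : ℂ)) * deriv (fun x : ℝ => (u x)⁻¹) α
        = ((deriv (fun x : ℝ => (‖u x‖)⁻¹) α : ℝ) : ℂ)
          + (u α / (‖u α‖ : ℂ)) * ((‖u α‖ : ℂ))⁻¹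
              * deriv (fun x : ℝ => (starRingEnd ℂ) (u x / (‖u x‖ : ℂ))) α := by
    intro α
    rw [(hUi α).deriv, (hNi α).deriv, (hWc α).deriv, hmc]
    exact stmt0_alg1 (u α) (deriv u α) (‖u α‖) _ (hne α) (hrC α) (h1 α) (h2 α)
  -- the purely imaginary term, in closed form
  have hEeq : ∀ α : ℝ,
      (u α / (‖u α‖ : ℂ)) * ((‖u α‖ : ℂ))⁻¹
          * deriv (fun x : ℝ => (starRingEnd ℂ) (u x / (‖u x‖ : ℂ))) α
        = (u α * (starRingEnd ℂ) (deriv u α)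
            - ((((starRingEnd ℂ) (u α) * deriv u α).re : ℝ) : ℂ)) / ((‖u α‖ : ℂ)) ^ 3 := by
    intro α
    rw [(hWc α).deriv, hmc]
    exact stmt0_alg2 (u α) (deriv u α) (‖u α‖) _ (hrC α) (h1 α)
  have hre' : ∀ α : ℝ, (u α * (starRingEnd ℂ) (deriv u α)).re
      = ((starRingEnd ℂ) (u α) * deriv u α).re := fun α => by
    simp [Complex.mul_re, Complex.conj_re, Complex.conj_im]
  -- part (iv)
  have hIV : ∀ α : ℝ,
      ((u α / (‖u α‖ : ℂ)) * ((‖u α‖ : ℂ))⁻¹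
          * deriv (fun x : ℝ => (starRingEnd ℂ) (u x / (‖u x‖ : ℂ))) α).re = 0 := by
    intro α
    rw [hEeq α, show ((‖u α‖ : ℂ)) ^ 3 = (((‖u α‖ ^ 3 : ℝ)) : ℂ) by push_cast; ring,
      Complex.div_ofReal_re]
    simp [Complex.sub_re, Complex.ofReal_re, hre' α]
  -- part (v)
  have hV : ∀ α : ℝ,
      ((u α / (‖u α‖ : ℂ)) * deriv (fun x : ℝ => (u x)⁻¹) α).re
        = deriv (fun x : ℝ => (‖u x‖)⁻¹) α := by
    intro α
    rw [hIII α]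
    rw [Complex.add_re, Complex.ofReal_re, hIV α, add_zero]
  -- |ω| = 1
  have hw1 : ∀ α : ℝ, ‖u α / (‖u α‖ : ℂ)‖ = 1 := fun α => by
    rw [norm_div, Complex.norm_real, Real.norm_eq_abs, _root_.abs_of_nonneg (norm_nonneg _),
      div_self (hr0 α)]
  -- part (vi)
  have hVI : ∀ α : ℝ,
      ‖deriv (fun x : ℝ => (u x)⁻¹) α‖ ^ 2
        = |deriv (fun x : ℝ => (‖u x‖)⁻¹) α| ^ 2
          + ((‖u α‖)⁻¹) ^ 2 * ‖deriv (fun x : ℝ => u x / (‖u x‖ : ℂ)) α‖ ^ 2 := by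
    intro α
    have hc : ‖deriv (fun x : ℝ => (u x)⁻¹) α‖
        = ‖(u α / (‖u α‖ : ℂ)) * deriv (fun x : ℝ => (u x)⁻¹) α‖ := by
      rw [norm_mul, hw1 α, one_mul]
    rw [hc, hIII α, stmt0_sq_decomp _ _ (hIV α)]
    congr 1
    -- ‖E‖² = (‖u α‖⁻¹)² ‖ω'‖²
    rw [(hWc α).deriv, (hW α).deriv, hmc]
    rw [show (u α / ((‖u α‖ : ℂ)) ^ 2) * (starRingEnd ℂ) ((deriv u α * (‖u α‖ : ℂ)
          - u α * (((((starRingEnd ℂ) (u α) * deriv u α).re / ‖u α‖) : ℝ) : ℂ))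
        / ((‖u α‖ : ℂ)) ^ 2)
      = (u α / (‖u α‖ : ℂ)) * ((‖u α‖ : ℂ))⁻¹ * (starRingEnd ℂ) ((deriv u α * (‖u α‖ : ℂ)
          - u α * (((((starRingEnd ℂ) (u α) * deriv u α).re / ‖u α‖) : ℝ) : ℂ))
        / ((‖u α‖ : ℂ)) ^ 2) by rw [hmc]]
    rw [norm_mul, norm_mul, hw1 α, one_mul, RCLike.norm_conj]
    rw [norm_inv, Complex.norm_real, Real.norm_eq_abs, _root_.abs_of_nonneg (norm_nonneg _)]
    ring
  -- pointwise bounds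
  have hb1 : ∀ x : ℝ, ‖deriv (fun t : ℝ => (‖u t‖)⁻¹) x‖
      ≤ ‖deriv (fun t : ℝ => (u t)⁻¹) x‖ := by
    intro x
    have h6 := hVI x
    rw [Real.norm_eq_abs]
    nlinarith [norm_nonneg (deriv (fun t : ℝ => (u t)⁻¹) x),
      abs_nonneg (deriv (fun t : ℝ => (‖u t‖)⁻¹) x),
      mul_nonneg (sq_nonneg ((‖u x‖)⁻¹)) (sq_nonneg ‖deriv (fun t : ℝ => u t / (‖u t‖ : ℂ)) x‖)]
  have hb2 : ∀ x : ℝ, ‖(‖u x‖)⁻¹ • deriv (fun t : ℝ => u t / (‖u t‖ : ℂ)) x‖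
      ≤ ‖deriv (fun t : ℝ => (u t)⁻¹) x‖ := by
    intro x
    rw [norm_smul, Real.norm_eq_abs, _root_.abs_of_nonneg (inv_nonneg.2 (norm_nonneg _))]
    have h6 := hVI x
    nlinarith [norm_nonneg (deriv (fun t : ℝ => (u t)⁻¹) x),
      sq_nonneg (|deriv (fun t : ℝ => (‖u t‖)⁻¹) x|),
      mul_nonneg (inv_nonneg.2 (norm_nonneg (u x)))
        (norm_nonneg (deriv (fun t : ℝ => u t / (‖u t‖ : ℂ)) x))]
  refine ⟨fun α => ((hNi α).differentiableAt : _), fun α => (hW α).differentiableAt,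
    hIII, hIV, hV, hVI, ?_⟩
  calc eLpNorm (deriv (fun x : ℝ => (‖u x‖)⁻¹)) 2 volume
      + eLpNorm (fun α : ℝ => (‖u α‖)⁻¹ • deriv (fun x : ℝ => u x / (‖u x‖ : ℂ)) α) 2 volume
      ≤ eLpNorm (deriv (fun x : ℝ => (u x)⁻¹)) 2 volume
        + eLpNorm (deriv (fun x : ℝ => (u x)⁻¹)) 2 volume :=
        add_le_add (eLpNorm_mono hb1) (eLpNorm_mono hb2)
    _ = 2 * eLpNorm (deriv (fun x : ℝ => (u x)⁻¹)) 2 volume := (two_mul _).symm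
end

section
/- Let w ∈ 𝒮(ℝ) be a complex-valued Schwartz function. Then for every α ∈ ℝ both of the following integrals converge absolutely and (2/π)·Re ∫_ℝ ((conj(w(α)) − conj(w(β)))/(α − β))·w'(β) dβ = (1/π) ∫_ℝ |w(α) − w(β)|²/(α − β)² dβ. In particular the left-hand side is nonnegative for every α. -/
open MeasureTheory Complex Filter Topology

lemma normsq_eq (z : ℂ) : ‖z‖ ^ 2 = z.re ^ 2 + z.im ^ 2 := by
  rw [Complex.sq_norm, Complex.normSq_apply]; ring

lemma hasDerivAt_g (w : SchwartzMap ℝ ℂ) (α β : ℝ) (hβ : α - β ≠ 0) :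
    HasDerivAt (fun b => ‖w α - w b‖ ^ 2 / (α - b))
      (‖w α - w β‖ ^ 2 / (α - β) ^ 2
        - 2 * (((starRingEnd ℂ) (w α) - (starRingEnd ℂ) (w β)) / ((α - β : ℝ) : ℂ)
            * deriv (⇑w) β).re) β := by
  have hw : HasDerivAt (⇑w) (deriv (⇑w) β) β := (w.differentiable β).hasDerivAt
  have hu : HasDerivAt (fun b => w α - w b) (-(deriv (⇑w) β)) β := by
    have := (hasDerivAt_const β (w α)).sub hw; rwa [zero_sub] at this
  have hre : HasDerivAt (fun b => (w α - w b).re) (-(deriv (⇑w) β)).re β :=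
    Complex.reCLM.hasFDerivAt.comp_hasDerivAt β hu
  have him : HasDerivAt (fun b => (w α - w b).im) (-(deriv (⇑w) β)).im β :=
    Complex.imCLM.hasFDerivAt.comp_hasDerivAt β hu
  have hφ : HasDerivAt (fun b => ‖w α - w b‖ ^ 2)
      (2 * (w α - w β).re * (-(deriv (⇑w) β)).re
        + 2 * (w α - w β).im * (-(deriv (⇑w) β)).im) β := by
    simp only [normsq_eq]
    have := (hre.pow 2).add (him.pow 2)
    refine this.congr_deriv ?_
    ring
  have hden : HasDerivAt (fun b : ℝ => α - b) (-1 : ℝ) β := by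
    have := (hasDerivAt_const β α).sub (hasDerivAt_id β); rwa [zero_sub] at this
  have h := hφ.div hden hβ
  refine h.congr_deriv ?_
  rw [div_mul_eq_mul_div, Complex.div_ofReal_re]
  simp only [Complex.mul_re, Complex.sub_re, Complex.sub_im, Complex.conj_re, Complex.conj_im,
    map_sub, Complex.neg_re, Complex.neg_im, normsq_eq]
  field_simp
  ring

/-- For a Schwartz function `w`, both integrals converge absolutely and
`(2/π)·Re ∫ ((conj w(α) − conj w(β))/(α − β))·w'(β) dβ
  = (1/π) ∫ |w(α) − w(β)|²/(α − β)² dβ`, which in particular is nonnegative. -/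
theorem statement1 (w : SchwartzMap ℝ ℂ) (α : ℝ) :
    Integrable (fun β : ℝ =>
      ((starRingEnd ℂ) (w α) - (starRingEnd ℂ) (w β)) / ((α - β : ℝ) : ℂ)
        * deriv (⇑w) β) ∧
    Integrable (fun β : ℝ => ‖w α - w β‖ ^ 2 / (α - β) ^ 2) ∧
    ((2 / Real.pi) * (∫ β : ℝ,
        ((starRingEnd ℂ) (w α) - (starRingEnd ℂ) (w β)) / ((α - β : ℝ) : ℂ)
          * deriv (⇑w) β).re
      = (1 / Real.pi) * ∫ β : ℝ, ‖w α - w β‖ ^ 2 / (α - β) ^ 2) ∧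
    0 ≤ (2 / Real.pi) * (∫ β : ℝ,
        ((starRingEnd ℂ) (w α) - (starRingEnd ℂ) (w β)) / ((α - β : ℝ) : ℂ)
          * deriv (⇑w) β).re := by
  set F : ℝ → ℂ := fun β =>
    ((starRingEnd ℂ) (w α) - (starRingEnd ℂ) (w β)) / ((α - β : ℝ) : ℂ) * deriv (⇑w) β with hF
  set G : ℝ → ℝ := fun β => ‖w α - w β‖ ^ 2 / (α - β) ^ 2 with hG
  set g : ℝ → ℝ := fun b => ‖w α - w b‖ ^ 2 / (α - b) with hg
  -- bounds
  obtain ⟨C₀, hC₀pos, hC₀⟩ := w.decay 0 0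
  have hC₀' : ∀ x, ‖w x‖ ≤ C₀ := by
    intro x; have := hC₀ x; simpa [norm_iteratedFDeriv_zero] using this
  obtain ⟨M, hMpos, hM⟩ := (SchwartzMap.derivCLM ℝ ℂ w).decay 0 0
  have hM' : ∀ x, ‖deriv (⇑w) x‖ ≤ M := by
    intro x; have := hM x
    simpa [norm_iteratedFDeriv_zero, SchwartzMap.derivCLM_apply] using this
  have hLip : ∀ x y : ℝ, ‖w x - w y‖ ≤ M * |x - y| := by
    intro x y
    have := Convex.norm_image_sub_le_of_norm_deriv_le
      (f := ⇑w) (s := Set.univ) (fun z _ => (w.differentiable z))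
      (fun z _ => hM' z) convex_univ (Set.mem_univ y) (Set.mem_univ x)
    simpa [Real.norm_eq_abs] using this
  have h2C : ∀ β, ‖w α - w β‖ ≤ 2 * C₀ := by
    intro β
    calc ‖w α - w β‖ ≤ ‖w α‖ + ‖w β‖ := norm_sub_le _ _
      _ ≤ C₀ + C₀ := add_le_add (hC₀' α) (hC₀' β)
      _ = 2 * C₀ := by ring
  have hderiv_eq : ⇑(SchwartzMap.derivCLM ℝ ℂ w) = deriv ⇑w :=
    funext fun x => SchwartzMap.derivCLM_apply (𝕜 := ℝ) w x
  have hcd : Continuous (deriv ⇑w) := hderiv_eq ▸ (SchwartzMap.derivCLM ℝ ℂ w).continuous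
  -- measurability
  have hFmeas : AEStronglyMeasurable F volume := by
    apply Measurable.aestronglyMeasurable
    exact ((measurable_const.sub
        ((Complex.continuous_conj.comp w.continuous).measurable)).div
        ((Complex.continuous_ofReal.comp (continuous_const.sub continuous_id)).measurable)).mul
      hcd.measurable
  have hGmeas : AEStronglyMeasurable G volume := by
    apply Measurable.aestronglyMeasurable
    exact (((continuous_const.sub w.continuous).norm.pow 2).measurable).div
      (((continuous_const.sub continuous_id).pow 2).measurable)
  -- integrability of F
  have hFbound : ∀ β, ‖F β‖ ≤ M * ‖deriv (⇑w) β‖ := by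
    intro β
    by_cases hβ : β = α
    · subst hβ
      simp only [hF, sub_self, zero_div, zero_mul, norm_zero]
      positivity
    · have hne : α - β ≠ 0 := sub_ne_zero.mpr fun h => hβ h.symm
      rw [hF]
      simp only [norm_mul, norm_div, Complex.norm_real, Real.norm_eq_abs]
      have h1 : ‖(starRingEnd ℂ) (w α) - (starRingEnd ℂ) (w β)‖ = ‖w α - w β‖ := by
        rw [← map_sub]; exact RCLike.norm_conj _
      rw [h1]
      have h2 : ‖w α - w β‖ / |α - β| ≤ M := by
        rw [div_le_iff₀ (abs_pos.mpr hne)]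
        exact hLip α β
      exact mul_le_mul_of_nonneg_right h2 (norm_nonneg _)
  have hFint : Integrable F := by
    apply Integrable.mono' (((SchwartzMap.derivCLM ℝ ℂ w).integrable).norm.const_mul M) hFmeas
    apply Filter.Eventually.of_forall
    intro β
    simpa [hderiv_eq] using hFbound β
  -- integrability of G
  have hGnonneg : ∀ β, 0 ≤ G β := by intro β; rw [hG]; positivity
  have hGboundM : ∀ β, G β ≤ M ^ 2 := by
    intro β
    by_cases hβ : β = α
    · subst hβ
      rw [hG]; simp only [sub_self, norm_zero]
      norm_num
      positivity
    · have hne : α - β ≠ 0 := sub_ne_zero.mpr fun h => hβ h.symm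
      rw [hG, div_le_iff₀ (by positivity)]
      calc ‖w α - w β‖ ^ 2 ≤ (M * |α - β|) ^ 2 :=
            pow_le_pow_left₀ (norm_nonneg _) (hLip α β) 2
        _ = M ^ 2 * (α - β) ^ 2 := by rw [mul_pow, _root_.sq_abs]
  have hGbound : ∀ β, G β ≤ (M ^ 2 + (2 * C₀) ^ 2) * (1 + (β - α) ^ 2)⁻¹ := by
    intro β
    have ht : (0:ℝ) < 1 + (β - α) ^ 2 := by positivity
    rw [← div_eq_mul_inv, le_div_iff₀ ht]
    have hGt : G β * (α - β) ^ 2 ≤ (2 * C₀) ^ 2 := by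
      by_cases hβ : β = α
      · subst hβ
        rw [hG]; simp only [sub_self, norm_zero]
        norm_num
        positivity
      · have hne : α - β ≠ 0 := sub_ne_zero.mpr fun h => hβ h.symm
        rw [hG, div_mul_cancel₀ _ (by positivity : (α - β) ^ 2 ≠ 0)]
        exact pow_le_pow_left₀ (norm_nonneg _) (h2C β) 2
    have hsq : (β - α) ^ 2 = (α - β) ^ 2 := by ring
    calc G β * (1 + (β - α) ^ 2) = G β + G β * (α - β) ^ 2 := by rw [hsq]; ring
      _ ≤ M ^ 2 + (2 * C₀) ^ 2 := add_le_add (hGboundM β) hGt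
  have hGint : Integrable G := by
    apply Integrable.mono'
      ((integrable_inv_one_add_sq.comp_sub_right α).const_mul (M ^ 2 + (2 * C₀) ^ 2)) hGmeas
    apply Filter.Eventually.of_forall
    intro β
    rw [Real.norm_eq_abs, _root_.abs_of_nonneg (hGnonneg β)]
    exact hGbound β
  -- properties of g
  have hgα : g α = 0 := by simp [hg]
  have hgnorm : ∀ β, ‖g β‖ ≤ M ^ 2 * |β - α| := by
    intro β
    by_cases hβ : β = α
    · subst hβ; simp [hg]
    · have hne : α - β ≠ 0 := sub_ne_zero.mpr fun h => hβ h.symm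
      rw [hg, Real.norm_eq_abs, abs_div, _root_.abs_of_nonneg (by positivity : (0:ℝ) ≤ ‖w α - w β‖ ^ 2),
        div_le_iff₀ (abs_pos.mpr hne)]
      have h2 : |β - α| * |α - β| = (α - β) ^ 2 := by
        rw [abs_sub_comm β α, ← abs_mul, ← sq, _root_.abs_of_nonneg (sq_nonneg _)]
      rw [mul_assoc, h2]
      calc ‖w α - w β‖ ^ 2 ≤ (M * |α - β|) ^ 2 :=
            pow_le_pow_left₀ (norm_nonneg _) (hLip α β) 2
        _ = M ^ 2 * (α - β) ^ 2 := by rw [mul_pow, _root_.sq_abs]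
  have hgcontat : ContinuousAt g α := by
    have htend : Tendsto g (𝓝 α) (𝓝 0) := by
      apply squeeze_zero_norm hgnorm
      have : Tendsto (fun β : ℝ => M ^ 2 * |β - α|) (𝓝 α) (𝓝 (M ^ 2 * |α - α|)) :=
        (continuous_const.mul ((continuous_id.sub continuous_const).abs)).tendsto α
      simpa using this
    rw [ContinuousAt, hgα]; exact htend
  have hgub : ∀ β, β ≠ α → ‖g β‖ ≤ (2 * C₀) ^ 2 / |α - β| := by
    intro β hβ
    have hne : α - β ≠ 0 := sub_ne_zero.mpr fun h => hβ h.symm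
    rw [hg, Real.norm_eq_abs, abs_div, _root_.abs_of_nonneg (by positivity : (0:ℝ) ≤ ‖w α - w β‖ ^ 2)]
    gcongr
    exact h2C β
  have htop : Tendsto g atTop (𝓝 0) := by
    apply squeeze_zero_norm' (a := fun β => (2 * C₀) ^ 2 / (β - α))
    · filter_upwards [eventually_gt_atTop α] with β hβ
      have := hgub β (ne_of_gt hβ)
      rwa [abs_sub_comm, _root_.abs_of_pos (by linarith : (0:ℝ) < β - α)] at this
    · exact Tendsto.div_atTop tendsto_const_nhds (tendsto_atTop_add_const_right atTop (-α)
        tendsto_id)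
  have hbot : Tendsto g atBot (𝓝 0) := by
    apply squeeze_zero_norm' (a := fun β => (2 * C₀) ^ 2 / (α - β))
    · filter_upwards [eventually_lt_atBot α] with β hβ
      have := hgub β (ne_of_lt hβ)
      rwa [_root_.abs_of_pos (by linarith : (0:ℝ) < α - β)] at this
    · refine Tendsto.div_atTop tendsto_const_nhds ?_
      have : Tendsto (fun β : ℝ => -β) atBot atTop := tendsto_neg_atBot_atTop
      have := tendsto_atTop_add_const_left atBot α this
      exact Tendsto.congr (fun x => (sub_eq_add_neg α x).symm) this
  -- FTC on the two half lines
  have hD : ∀ β : ℝ, β ≠ α → HasDerivAt g (G β - 2 * (F β).re) β := by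
    intro β hβ
    have hne : α - β ≠ 0 := sub_ne_zero.mpr fun h => hβ h.symm
    exact hasDerivAt_g w α β hne
  have hf'int : Integrable (fun β => G β - 2 * (F β).re) :=
    hGint.sub ((hFint.re).const_mul 2)
  have hIoi : ∫ β in Set.Ioi α, (G β - 2 * (F β).re) = 0 := by
    rw [MeasureTheory.integral_Ioi_of_hasDerivAt_of_tendsto hgcontat.continuousWithinAt
      (fun x hx => hD x (ne_of_gt hx)) hf'int.integrableOn htop]
    rw [hgα]; ring
  have hIic : ∫ β in Set.Iic α, (G β - 2 * (F β).re) = 0 := by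
    rw [MeasureTheory.integral_Iic_of_hasDerivAt_of_tendsto hgcontat.continuousWithinAt
      (fun x hx => hD x (ne_of_lt hx)) hf'int.integrableOn hbot]
    rw [hgα]; ring
  have htotal : ∫ β, (G β - 2 * (F β).re) = 0 := by
    rw [← intervalIntegral.integral_Iic_add_Ioi hf'int.integrableOn hf'int.integrableOn, hIic, hIoi]; ring
  have hFre : Integrable (fun β => 2 * (F β).re) := by
    simpa [RCLike.re_to_complex] using (hFint.re).const_mul 2
  have hsub : ∫ β, (G β - 2 * (F β).re) = (∫ β, G β) - 2 * ∫ β, (F β).re := by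
    rw [integral_sub hGint hFre, integral_const_mul]
  have hre : ∫ β, (F β).re = (∫ β, F β).re := by
    have := _root_.integral_re hFint
    simpa [RCLike.re_to_complex] using this
  have hkey : ∫ β, G β = 2 * (∫ β, F β).re := by
    rw [hsub] at htotal
    rw [hre] at htotal
    linarith
  refine ⟨hFint, hGint, ?_, ?_⟩
  · rw [hkey]; ring
  · have h1 : (0:ℝ) ≤ ∫ β, G β := integral_nonneg hGnonneg
    have h2 : (2 / Real.pi) * (∫ β, F β).re = (1 / Real.pi) * ∫ β, G β := by rw [hkey]; ring
    rw [h2]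
    exact mul_nonneg (by positivity) h1
end

section
/- Let w : ℝ → ℂ be twice continuously differentiable, bounded, and such that w' is a Schwartz function. Then for every α ∈ ℝ, |w(α)·w'(α)|² ≤ 2·‖w'‖_{L²(ℝ)}·‖w·(w·w')'‖_{L²(ℝ)}. In particular, sup_{α∈ℝ} |w(α)w'(α)|² ≤ 2‖w'‖_{L²}‖w·(ww')'‖_{L²}. -/
open MeasureTheory Complex Filter Topology
open scoped ENNReal NNReal

/-- For `w : ℝ → ℂ` twice continuously differentiable, bounded, with `w'`
a Schwartz function, one has the pointwise bound
`|w(α)w'(α)|² ≤ 2‖w'‖_{L²}‖w·(ww')'‖_{L²}` and the corresponding supremum bound. -/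
theorem statement2 (w : ℝ → ℂ) (hw : ContDiff ℝ 2 w)
    (hbdd : ∃ C : ℝ, ∀ α : ℝ, ‖w α‖ ≤ C)
    (hw' : ∃ g : SchwartzMap ℝ ℂ, ⇑g = deriv w) :
    (∀ α : ℝ, (‖w α * deriv w α‖₊ : ℝ≥0∞) ^ 2
        ≤ 2 * eLpNorm (deriv w) 2 volume *
            eLpNorm (fun x : ℝ => w x * deriv (fun y : ℝ => w y * deriv w y) x) 2 volume) ∧
    (⨆ α : ℝ, (‖w α * deriv w α‖₊ : ℝ≥0∞) ^ 2)
        ≤ 2 * eLpNorm (deriv w) 2 volume *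
            eLpNorm (fun x : ℝ => w x * deriv (fun y : ℝ => w y * deriv w y) x) 2 volume := by
  obtain ⟨C, hC⟩ := hbdd
  obtain ⟨gS, hgS⟩ := hw'
  set F : ℝ → ℂ := fun y : ℝ => w y * deriv w y with hFdef
  have hw12 : ContDiff ℝ ((1 : WithTop ℕ∞) + 1) w := by
    have : ((1 : WithTop ℕ∞) + 1) = 2 := by norm_num
    rw [this]; exact hw
  have hw1 : ContDiff ℝ 1 (deriv w) := (contDiff_succ_iff_deriv.mp hw12).2.2
  have hF1 : ContDiff ℝ 1 F := (hw.of_le one_le_two).mul hw1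
  have hFd : Differentiable ℝ F := hF1.differentiable one_ne_zero
  have hcF' : Continuous (deriv F) := hF1.continuous_deriv le_rfl
  have hcF : Continuous F := hF1.continuous
  have hcw' : Continuous (deriv w) := hw1.continuous
  have hcw : Continuous w := hw.continuous
  -- G = ‖F‖², its derivative D
  set G : ℝ → ℝ := fun x => ‖F x‖ ^ 2 with hGdef
  set D : ℝ → ℝ := fun x => 2 * (inner ℝ (F x) (deriv F x) : ℝ) with hDdef
  have hGD : ∀ x : ℝ, HasDerivAt G (D x) x := fun x => ((hFd x).hasDerivAt).norm_sq
  have hcD : Continuous D := continuous_const.mul (hcF.inner hcF')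
  -- majorant φ
  set φ : ℝ → ℝ := fun x => 2 * (‖deriv w x‖ * ‖w x * deriv F x‖) with hφdef
  have hcφ : Continuous φ :=
    continuous_const.mul (hcw'.norm.mul (hcw.mul hcF').norm)
  have hφ0 : ∀ x, 0 ≤ φ x := fun x => by positivity
  have hDφ : ∀ x, |D x| ≤ φ x := by
    intro x
    have h1 : |(inner ℝ (F x) (deriv F x) : ℝ)| ≤ ‖F x‖ * ‖deriv F x‖ :=
      abs_real_inner_le_norm _ _
    have h2 : ‖F x‖ * ‖deriv F x‖ = ‖deriv w x‖ * ‖w x * deriv F x‖ := by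
      simp only [hFdef, norm_mul]; ring
    calc |D x| = 2 * |(inner ℝ (F x) (deriv F x) : ℝ)| := by
          rw [hDdef, abs_mul]; norm_num
      _ ≤ 2 * (‖F x‖ * ‖deriv F x‖) := by linarith
      _ = φ x := by rw [h2]
  -- the ENNReal bound L
  set L : ℝ≥0∞ := ∫⁻ x : ℝ, ENNReal.ofReal (φ x) with hLdef
  -- key pointwise inequality
  have key : ∀ α : ℝ, ENNReal.ofReal (G α) ≤ L := by
    intro α
    have hstep : ∀ β : ℝ, β ≤ α → ENNReal.ofReal (G α) ≤ ENNReal.ofReal (G β) + L := by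
      intro β hβ
      have hii : IntervalIntegrable D volume β α := hcD.intervalIntegrable _ _
      have hii' : IntervalIntegrable φ volume β α := hcφ.intervalIntegrable _ _
      have hFTC : ∫ y in β..α, D y = G α - G β :=
        intervalIntegral.integral_eq_sub_of_hasDerivAt (fun x _ => hGD x) hii
      have hmono : ∫ y in β..α, D y ≤ ∫ y in β..α, φ y :=
        intervalIntegral.integral_mono_on hβ hii hii'
          (fun x _ => (le_abs_self _).trans (hDφ x))
      have hreal : G α ≤ G β + ∫ y in β..α, φ y := by linarith [hFTC ▸ hmono]
      have hint : Integrable φ (volume.restrict (Set.Ioc β α)) :=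
        hcφ.integrableOn_Ioc
      have hIoc : ENNReal.ofReal (∫ y in β..α, φ y) ≤ L := by
        rw [intervalIntegral.integral_of_le hβ,
          ofReal_integral_eq_lintegral_ofReal hint
            (Filter.Eventually.of_forall fun x => hφ0 x)]
        exact (setLIntegral_le_lintegral _ _)
      calc ENNReal.ofReal (G α) ≤ ENNReal.ofReal (G β + ∫ y in β..α, φ y) :=
            ENNReal.ofReal_le_ofReal hreal
        _ ≤ ENNReal.ofReal (G β) + ENNReal.ofReal (∫ y in β..α, φ y) :=
            ENNReal.ofReal_add_le
        _ ≤ ENNReal.ofReal (G β) + L := add_le_add le_rfl hIoc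
    -- w' → 0 at -∞
    have hw'0 : Tendsto (deriv w) atBot (𝓝 0) := by
      have h1 : Tendsto (⇑gS) (Filter.cocompact ℝ) (𝓝 0) :=
        gS.toZeroAtInfty.zero_at_infty'
      rw [hgS] at h1
      exact h1.mono_left (by rw [cocompact_eq_atBot_atTop]; exact le_sup_left)
    have hG0 : Tendsto G atBot (𝓝 0) := by
      have hb : ∀ β : ℝ, |G β| ≤ (max C 0) ^ 2 * ‖deriv w β‖ ^ 2 := by
        intro β
        have h1 : ‖F β‖ ≤ max C 0 * ‖deriv w β‖ := by
          rw [hFdef, norm_mul]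
          exact mul_le_mul_of_nonneg_right ((hC β).trans (le_max_left _ _)) (norm_nonneg _)
        have h2 : ‖F β‖ ^ 2 ≤ (max C 0 * ‖deriv w β‖) ^ 2 :=
          pow_le_pow_left₀ (norm_nonneg _) h1 2
        rw [hGdef, _root_.abs_of_nonneg (by positivity)]
        calc ‖F β‖ ^ 2 ≤ (max C 0 * ‖deriv w β‖) ^ 2 := h2
          _ = (max C 0) ^ 2 * ‖deriv w β‖ ^ 2 := by ring
      have ht : Tendsto (fun β => (max C 0) ^ 2 * ‖deriv w β‖ ^ 2) atBot (𝓝 0) := by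
        have : Tendsto (fun β => ‖deriv w β‖) atBot (𝓝 0) := by
          simpa using hw'0.norm
        have h2 : Tendsto (fun β => ‖deriv w β‖ ^ 2) atBot (𝓝 0) := by
          simpa using this.pow 2
        simpa using h2.const_mul ((max C 0) ^ 2)
      exact squeeze_zero_norm (a := fun β => (max C 0) ^ 2 * ‖deriv w β‖ ^ 2)
        (fun β => by rw [Real.norm_eq_abs]; exact hb β) ht
    have hlim : Tendsto (fun β => ENNReal.ofReal (G β) + L) atBot (𝓝 (0 + L)) := by
      refine Tendsto.add_const L ?_
      have := (ENNReal.continuous_ofReal.tendsto 0).comp hG0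
      simpa [Function.comp_def] using this
    rw [zero_add] at hlim
    exact ge_of_tendsto hlim (Filter.eventually_atBot.mpr ⟨α, fun β hβ => hstep β hβ⟩)
  -- Hölder: L ≤ 2 * ‖w'‖₂ * ‖w F'‖₂
  have hL : L ≤ 2 * eLpNorm (deriv w) 2 volume *
      eLpNorm (fun x : ℝ => w x * deriv F x) 2 volume := by
    have hLeq : L = 2 * ∫⁻ x : ℝ, (‖deriv w x‖₊ : ℝ≥0∞) * (‖w x * deriv F x‖₊ : ℝ≥0∞) := by
      rw [hLdef, ← lintegral_const_mul' 2 _ (by norm_num)]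
      congr 1; funext x
      rw [hφdef]
      rw [ENNReal.ofReal_mul (by norm_num), ENNReal.ofReal_mul (norm_nonneg _),
        ofReal_norm, ofReal_norm, ENNReal.ofReal_ofNat, enorm_eq_nnnorm, enorm_eq_nnnorm]
    have hmeas1 : AEMeasurable (fun x : ℝ => (‖deriv w x‖₊ : ℝ≥0∞)) volume :=
      (hcw'.nnnorm.measurable.coe_nnreal_ennreal).aemeasurable
    have hmeas2 : AEMeasurable (fun x : ℝ => (‖w x * deriv F x‖₊ : ℝ≥0∞)) volume :=
      ((hcw.mul hcF').nnnorm.measurable.coe_nnreal_ennreal).aemeasurable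
    have hconj : Real.HolderConjugate 2 2 := Real.holderConjugate_iff.mpr ⟨one_lt_two, by norm_num⟩
    have hHolder := ENNReal.lintegral_mul_le_Lp_mul_Lq volume hconj hmeas1 hmeas2
    have he1 : eLpNorm (deriv w) 2 volume
        = (∫⁻ x : ℝ, (‖deriv w x‖₊ : ℝ≥0∞) ^ (2 : ℝ)) ^ ((1 : ℝ) / 2) := by
      rw [eLpNorm_eq_lintegral_rpow_enorm_toReal (by norm_num) (by norm_num)]
      norm_num [enorm_eq_nnnorm]
    have he2 : eLpNorm (fun x : ℝ => w x * deriv F x) 2 volume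
        = (∫⁻ x : ℝ, (‖w x * deriv F x‖₊ : ℝ≥0∞) ^ (2 : ℝ)) ^ ((1 : ℝ) / 2) := by
      rw [eLpNorm_eq_lintegral_rpow_enorm_toReal (by norm_num) (by norm_num)]
      norm_num [enorm_eq_nnnorm]
    calc L = 2 * ∫⁻ x : ℝ, (‖deriv w x‖₊ : ℝ≥0∞) * (‖w x * deriv F x‖₊ : ℝ≥0∞) := hLeq
      _ ≤ 2 * ((∫⁻ x : ℝ, (‖deriv w x‖₊ : ℝ≥0∞) ^ (2 : ℝ)) ^ ((1 : ℝ) / 2) *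
            (∫⁻ x : ℝ, (‖w x * deriv F x‖₊ : ℝ≥0∞) ^ (2 : ℝ)) ^ ((1 : ℝ) / 2)) :=
          mul_le_mul_right hHolder 2
      _ = 2 * eLpNorm (deriv w) 2 volume *
            eLpNorm (fun x : ℝ => w x * deriv F x) 2 volume := by
          rw [he1, he2, mul_assoc]
  have main : ∀ α : ℝ, (‖w α * deriv w α‖₊ : ℝ≥0∞) ^ 2
      ≤ 2 * eLpNorm (deriv w) 2 volume *
          eLpNorm (fun x : ℝ => w x * deriv (fun y : ℝ => w y * deriv w y) x) 2 volume := by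
    intro α
    have hlhs : (‖w α * deriv w α‖₊ : ℝ≥0∞) ^ 2 = ENNReal.ofReal (G α) := by
      rw [hGdef]
      rw [ENNReal.ofReal_pow (norm_nonneg _)]
      rw [ofReal_norm, enorm_eq_nnnorm]
    rw [hlhs]
    exact (key α).trans hL
  exact ⟨main, iSup_le main⟩
end

section
/- There exists a universal constant C > 0 such that for every complex-valued Schwartz function f ∈ 𝒮(ℝ), ∫_ℝ ( sup_{β ≠ α} |f(α) − f(β)|/|α − β| )² dα ≤ C·‖f'‖_{L²(ℝ)}², where for each α the supremum is taken over all β ∈ ℝ with β ≠ α. -/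
open MeasureTheory Complex Set Filter
open scoped ENNReal NNReal Topology

noncomputable section

def mx (g : ℝ → ℝ≥0∞) (x : ℝ) : ℝ≥0∞ :=
  ⨆ (y : ℝ) (_ : y ≠ x), (∫⁻ t in Set.uIoc x y, g t) / ENNReal.ofReal |x - y|

lemma weak_bound (h : ℝ → ℝ≥0∞) (hh : Measurable h) (c : ℝ≥0∞) :
    c * volume {x | c < mx h x} ≤ 4 * ∫⁻ t, h t := by
  rcases eq_or_ne c 0 with rfl | hc0
  · simp
  rcases eq_or_ne c ∞ with rfl | hctop
  · have : {x | (∞:ℝ≥0∞) < mx h x} = ∅ := by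
      ext x; simp [not_top_lt]
    simp [this]
  rcases eq_or_ne (∫⁻ t, h t) ∞ with htop | hfin
  · rw [htop]
    refine le_trans le_top (le_of_eq ?_)
    simp
  set E := {x | c < mx h x} with hE
  have key : ∀ x ∈ E, ∃ y, y ≠ x ∧
      c * ENNReal.ofReal |x - y| < ∫⁻ t in Set.uIoc x y, h t := by
    intro x hx
    rw [hE, mem_setOf_eq, mx, lt_iSup_iff] at hx
    obtain ⟨y, hy⟩ := hx
    rw [lt_iSup_iff] at hy
    obtain ⟨hyx, hy⟩ := hy
    refine ⟨y, hyx, ?_⟩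
    have hb0 : ENNReal.ofReal |x - y| ≠ 0 := by
      simp only [ne_eq, ENNReal.ofReal_eq_zero, not_le]
      rw [abs_pos, sub_ne_zero]
      exact fun e => hyx e.symm
    rwa [ENNReal.lt_div_iff_mul_lt (Or.inl hb0) (Or.inl ENNReal.ofReal_ne_top)] at hy
  choose! y hyne hylt using key
  set ctr : ℝ → ℝ := fun x => (x + y x) / 2 with hctr
  set rad : ℝ → ℝ := fun x => |x - y x| / 2 with hrad
  have ball_eq : ∀ x : ℝ, Metric.closedBall (ctr x) (rad x) = Set.uIcc x (y x) := by
    intro x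
    rw [Set.uIcc, Real.Icc_eq_closedBall]
    have e1 : (x ⊓ y x + x ⊔ y x) / 2 = ctr x := by
      simp only [hctr]
      rw [min_add_max]
    have e2 : (x ⊔ y x - x ⊓ y x) / 2 = rad x := by
      simp only [hrad]
      rw [max_sub_min_eq_abs, abs_sub_comm]
    rw [e1, e2]
  -- radius bound
  set R : ℝ := ((∫⁻ t, h t) / c).toReal with hR
  have hrle : ∀ x ∈ E, rad x ≤ R := by
    intro x hx
    have h1 : c * ENNReal.ofReal |x - y x| ≤ ∫⁻ t, h t :=
      le_trans (hylt x hx).le (setLIntegral_le_lintegral _ _)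
    have h2 : ENNReal.ofReal |x - y x| ≤ (∫⁻ t, h t) / c := by
      rw [ENNReal.le_div_iff_mul_le (Or.inl hc0) (Or.inl hctop)]
      rwa [mul_comm]
    have h3 : (∫⁻ t, h t) / c ≠ ∞ := by
      simp [ENNReal.div_eq_top, hc0, hfin]
    have h4 : |x - y x| ≤ R := by
      rw [hR]
      exact (ENNReal.ofReal_le_iff_le_toReal h3).1 h2
    have := abs_nonneg (x - y x)
    simp only [hrad]
    linarith
  obtain ⟨u, uE, u_disj, hcov⟩ :=
    Vitali.exists_disjoint_subfamily_covering_enlargement_closedBall E ctr rad R hrle 4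
      (by norm_num)
  -- countability
  have hradpos : ∀ x ∈ E, 0 < rad x := by
    intro x hx
    have : y x ≠ x := hyne x hx
    simp only [hrad]
    have : 0 < |x - y x| := by rw [abs_pos, sub_ne_zero]; exact fun e => this e.symm
    linarith
  have hu_count : u.Countable := by
    apply u_disj.countable_of_nonempty_interior
    intro x hx
    have hx' : x ∈ E := uE hx
    have h1 : (Metric.ball (ctr x) (rad x)).Nonempty :=
      Metric.nonempty_ball.2 (hradpos x hx')
    exact h1.mono Metric.ball_subset_interior_closedBall
  -- covering
  have hEcov : E ⊆ ⋃ b ∈ u, Metric.closedBall (ctr b) (4 * rad b) := by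
    intro x hx
    obtain ⟨b, hbu, hsub⟩ := hcov x hx
    have hxmem : x ∈ Metric.closedBall (ctr x) (rad x) := by
      rw [ball_eq]
      exact Set.left_mem_uIcc
    exact mem_biUnion hbu (hsub hxmem)
  haveI : Countable u := hu_count.to_subtype
  calc c * volume E ≤ c * volume (⋃ b ∈ u, Metric.closedBall (ctr b) (4 * rad b)) :=
        mul_le_mul_right (measure_mono hEcov) c
    _ ≤ c * ∑' b : u, volume (Metric.closedBall (ctr b) (4 * rad b)) := by
        refine mul_le_mul_right ?_ c
        rw [biUnion_eq_iUnion]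
        exact measure_iUnion_le _
    _ = ∑' b : u, c * ENNReal.ofReal (2 * (4 * rad b)) := by
        rw [← ENNReal.tsum_mul_left]
        congr 1; funext b; rw [Real.volume_closedBall]
    _ = ∑' b : u, 4 * (c * ENNReal.ofReal |(b:ℝ) - y b|) := by
        congr 1; funext b
        have : (2 : ℝ) * (4 * rad b) = 4 * |(b:ℝ) - y b| := by
          simp only [hrad]; ring
        rw [this, ENNReal.ofReal_mul (by norm_num), ENNReal.ofReal_ofNat]
        ring
    _ ≤ ∑' b : u, 4 * ∫⁻ t in Set.uIoc (b : ℝ) (y b), h t := by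
        gcongr with b
        exact (hylt b (uE b.2)).le
    _ = 4 * ∑' b : u, ∫⁻ t in Set.uIoc (b : ℝ) (y b), h t := by
        rw [ENNReal.tsum_mul_left]
    _ = 4 * ∫⁻ t in ⋃ b : u, Set.uIoc (b : ℝ) (y b), h t := by
        congr 1
        rw [lintegral_iUnion]
        · intro b; exact measurableSet_uIoc
        · intro b b' hbb'
          have hd : Disjoint (Metric.closedBall (ctr b) (rad b))
              (Metric.closedBall (ctr b') (rad b')) := u_disj b.2 b'.2 (Subtype.coe_ne_coe.2 hbb')
          refine hd.mono ?_ ?_ <;>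
          · rw [ball_eq]
            exact Set.uIoc_subset_uIcc
    _ ≤ 4 * ∫⁻ t, h t := by
        gcongr
        exact Measure.restrict_le_self



lemma num_eq (r : ℝ → ℝ) (hint : Integrable r volume) (hnn : ∀ t, 0 ≤ r t) (x y : ℝ) :
    ∫⁻ t in Set.uIoc x y, ENNReal.ofReal (r t)
      = ENNReal.ofReal ((∫ t in (0:ℝ)..(x ⊔ y), r t) - ∫ t in (0:ℝ)..(x ⊓ y), r t) := by
  have h1 : (∫ t in (0:ℝ)..(x ⊔ y), r t) - ∫ t in (0:ℝ)..(x ⊓ y), r t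
      = ∫ t in (x ⊓ y)..(x ⊔ y), r t := by
    rw [intervalIntegral.integral_interval_sub_left hint.intervalIntegrable
      hint.intervalIntegrable]
  rw [h1, intervalIntegral.integral_of_le inf_le_sup]
  rw [MeasureTheory.ofReal_integral_eq_lintegral_ofReal (hint.restrict)
    (Filter.Eventually.of_forall hnn)]
  rfl

lemma mx_lsc (r : ℝ → ℝ) (hr : Continuous r) (hint : Integrable r volume)
    (hnn : ∀ t, 0 ≤ r t) :
    LowerSemicontinuous (mx (fun t => ENNReal.ofReal (r t))) := by
  intro x0 v hv
  rw [mx, gt_iff_lt, lt_iSup_iff] at hv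
  obtain ⟨y, hv⟩ := hv
  rw [lt_iSup_iff] at hv
  obtain ⟨hyx, hv⟩ := hv
  -- the quotient function
  set Q : ℝ → ℝ≥0∞ := fun x =>
    (∫⁻ t in Set.uIoc x y, ENNReal.ofReal (r t)) / ENNReal.ofReal |x - y| with hQ
  have hcont : ContinuousAt Q x0 := by
    have hN : Continuous fun x => ∫⁻ t in Set.uIoc x y, ENNReal.ofReal (r t) := by
      have : (fun x => ∫⁻ t in Set.uIoc x y, ENNReal.ofReal (r t))
          = fun x => ENNReal.ofReal ((∫ t in (0:ℝ)..(x ⊔ y), r t)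
              - ∫ t in (0:ℝ)..(x ⊓ y), r t) := by
        funext x; exact num_eq r hint hnn x y
      rw [this]
      have hH : Continuous fun z : ℝ => ∫ t in (0:ℝ)..z, r t :=
        intervalIntegral.continuous_primitive (fun a b => hint.intervalIntegrable) 0
      exact ENNReal.continuous_ofReal.comp
        ((hH.comp (continuous_id.sup continuous_const)).sub
          (hH.comp (continuous_id.inf continuous_const)))
    have hD : ContinuousAt (fun x => ENNReal.ofReal |x - y|) x0 :=
      (ENNReal.continuous_ofReal.comp ((continuous_id.sub continuous_const).abs)).continuousAt
    have hD0 : ENNReal.ofReal |x0 - y| ≠ 0 := by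
      simp only [ne_eq, ENNReal.ofReal_eq_zero, not_le, abs_pos, sub_ne_zero]
      exact fun e => hyx e.symm
    have hNtop : (∫⁻ t in Set.uIoc x0 y, ENNReal.ofReal (r t)) ≠ ∞ := by
      rw [num_eq r hint hnn]
      exact ENNReal.ofReal_ne_top
    exact ENNReal.Tendsto.div hN.continuousAt (Or.inr hD0) hD
      (Or.inl ENNReal.ofReal_ne_top)
  have hev1 : ∀ᶠ x in 𝓝 x0, v < Q x := hcont.eventually_const_lt hv
  have hev2 : ∀ᶠ x in 𝓝 x0, x ≠ y := eventually_ne_nhds (Ne.symm hyx)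
  filter_upwards [hev1, hev2] with x h1 h2
  refine lt_of_lt_of_le h1 ?_
  rw [mx]
  exact le_iSup₂ (f := fun (z : ℝ) (_ : z ≠ x) =>
    (∫⁻ t in Set.uIoc x z, ENNReal.ofReal (r t)) / ENNReal.ofReal |x - z|) y
    (fun e => h2 e.symm)


lemma meas_lt_ofReal (a : ℝ≥0∞) : volume {t : ℝ | t ∈ Ioi (0:ℝ) ∧ ENNReal.ofReal t < a} = a := by
  rcases eq_or_ne a ∞ with rfl | ha
  · have : {t : ℝ | t ∈ Ioi (0:ℝ) ∧ ENNReal.ofReal t < ∞} = Ioi 0 := by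
      ext t; simp [ENNReal.ofReal_lt_top]
    rw [this, Real.volume_Ioi]
  · have : {t : ℝ | t ∈ Ioi (0:ℝ) ∧ ENNReal.ofReal t < a} = Ioo 0 a.toReal := by
      ext t
      simp only [mem_setOf_eq, mem_Ioi, mem_Ioo]
      constructor
      · rintro ⟨ht, hlt⟩
        exact ⟨ht, (ENNReal.ofReal_lt_iff_lt_toReal ht.le ha).1 hlt⟩
      · rintro ⟨ht, hlt⟩
        exact ⟨ht, (ENNReal.ofReal_lt_iff_lt_toReal ht.le ha).2 hlt⟩
    rw [this, Real.volume_Ioo, sub_zero, ENNReal.ofReal_toReal ha]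

lemma pointwise_layer (a : ℝ≥0∞) :
    ∫⁻ t in Ioi (0:ℝ), (if ENNReal.ofReal t < a then ENNReal.ofReal (2*t) else 0) = a ^ 2 := by
  have hind : (fun t : ℝ => if ENNReal.ofReal t < a then ENNReal.ofReal (2*t) else 0)
      = {s : ℝ | ENNReal.ofReal s < a}.indicator (fun s => ENNReal.ofReal (2*s)) := by
    funext t; rw [Set.indicator_apply]; rfl
  have hS : MeasurableSet {s : ℝ | ENNReal.ofReal s < a} :=
    measurableSet_lt (ENNReal.measurable_ofReal) measurable_const
  rw [hind, lintegral_indicator hS, Measure.restrict_restrict hS]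
  rcases eq_or_ne a ∞ with rfl | ha
  · have hset : {s : ℝ | ENNReal.ofReal s < ∞} ∩ Ioi 0 = Ioi 0 := by
      ext t; simp [ENNReal.ofReal_lt_top]
    rw [hset]
    rw [ENNReal.top_pow (by norm_num)]
    rw [eq_top_iff]
    calc (⊤:ℝ≥0∞) = 2 * volume (Ioi (1:ℝ)) := by simp [Real.volume_Ioi]
      _ = ∫⁻ _ in Ioi (1:ℝ), (2:ℝ≥0∞) := by rw [setLIntegral_const]
      _ ≤ ∫⁻ t in Ioi (1:ℝ), ENNReal.ofReal (2*t) := by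
          refine setLIntegral_mono (by fun_prop) ?_
          intro t ht
          have : (2:ℝ≥0∞) = ENNReal.ofReal 2 := by norm_num
          rw [this]
          exact ENNReal.ofReal_le_ofReal (by simp at ht; linarith)
      _ ≤ ∫⁻ t in Ioi (0:ℝ), ENNReal.ofReal (2*t) := by
          refine lintegral_mono' (Measure.restrict_mono (fun t ht => ?_) le_rfl) le_rfl
          simp at ht ⊢; linarith
  · set A := a.toReal with hA
    have hA0 : 0 ≤ A := ENNReal.toReal_nonneg
    have hset : {s : ℝ | ENNReal.ofReal s < a} ∩ Ioi 0 = Ioo 0 A := by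
      ext t
      simp only [mem_inter_iff, mem_setOf_eq, mem_Ioi, mem_Ioo]
      constructor
      · rintro ⟨hlt, ht⟩
        exact ⟨ht, (ENNReal.ofReal_lt_iff_lt_toReal ht.le ha).1 hlt⟩
      · rintro ⟨ht, hlt⟩
        exact ⟨(ENNReal.ofReal_lt_iff_lt_toReal ht.le ha).2 hlt, ht⟩
    rw [hset]
    have hcont : IntegrableOn (fun t : ℝ => 2*t) (Ioo 0 A) volume :=
      ((continuous_const.mul continuous_id).integrableOn_Icc).mono_set Ioo_subset_Icc_self
    rw [← MeasureTheory.ofReal_integral_eq_lintegral_ofReal hcont ?_]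
    · have : ∫ t in Ioo (0:ℝ) A, 2*t = A^2 := by
        rw [← MeasureTheory.integral_Ioc_eq_integral_Ioo,
          ← intervalIntegral.integral_of_le hA0]
        rw [intervalIntegral.integral_const_mul, integral_id]
        ring
      rw [this, ENNReal.ofReal_pow hA0, hA, ENNReal.ofReal_toReal ha]
    · filter_upwards [ae_restrict_mem measurableSet_Ioo] with t ht
      simp only [mem_Ioo] at ht
      simp only [Pi.zero_apply]
      linarith [ht.1]

lemma layercake_sq (h : ℝ → ℝ≥0∞) (hm : Measurable h) :
    ∫⁻ x, (h x) ^ 2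
      = ∫⁻ t in Ioi (0:ℝ), ENNReal.ofReal (2*t) * volume {x | ENNReal.ofReal t < h x} := by
  have e1 : ∀ x, (h x) ^ 2
      = ∫⁻ t in Ioi (0:ℝ), (if ENNReal.ofReal t < h x then ENNReal.ofReal (2*t) else 0) :=
    fun x => (pointwise_layer (h x)).symm
  simp_rw [e1]
  rw [lintegral_lintegral_swap]
  · congr 1
    funext t
    have : (fun x => if ENNReal.ofReal t < h x then ENNReal.ofReal (2*t) else 0)
        = {x : ℝ | ENNReal.ofReal t < h x}.indicator (fun _ => ENNReal.ofReal (2*t)) := by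
      funext x; rw [Set.indicator_apply]; rfl
    rw [this, lintegral_indicator_const (measurableSet_lt measurable_const hm)]
  · have hSet : MeasurableSet {p : ℝ × ℝ | ENNReal.ofReal p.2 < h p.1} :=
      measurableSet_lt (ENNReal.measurable_ofReal.comp measurable_snd)
        (hm.comp measurable_fst)
    have : (Function.uncurry fun x t =>
        if ENNReal.ofReal t < h x then ENNReal.ofReal (2*t) else 0)
        = {p : ℝ × ℝ | ENNReal.ofReal p.2 < h p.1}.indicator
            (fun p => ENNReal.ofReal (2*p.2)) := by
      funext p
      cases p with
      | mk x t => rw [Set.indicator_apply]; rfl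
    rw [this]
    exact ((ENNReal.measurable_ofReal.comp (measurable_const.mul measurable_snd)).indicator
      hSet).aemeasurable

/-- The strong (2,2) bound for the maximal operator. -/
lemma strong_bound (r : ℝ → ℝ) (hr : Continuous r) (hint : Integrable r volume)
    (hnn : ∀ t, 0 ≤ r t) :
    ∫⁻ x, (mx (fun t => ENNReal.ofReal (r t)) x) ^ 2
      ≤ 32 * ∫⁻ x, (ENNReal.ofReal (r x)) ^ 2 := by
  set g : ℝ → ℝ≥0∞ := fun t => ENNReal.ofReal (r t) with hg
  have hgm : Measurable g := ENNReal.measurable_ofReal.comp hr.measurable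
  have hmeas : Measurable (mx g) := (mx_lsc r hr hint hnn).measurable
  rw [layercake_sq _ hmeas]
  -- bound the integrand for each t > 0
  have main : ∀ t : ℝ, t ∈ Ioi (0:ℝ) →
      ENNReal.ofReal (2*t) * volume {x | ENNReal.ofReal t < mx g x}
        ≤ 16 * ∫⁻ x, (if ENNReal.ofReal t / 2 < g x then g x else 0) := by
    intro t ht
    simp only [mem_Ioi] at ht
    set c : ℝ≥0∞ := ENNReal.ofReal t with hc
    have hc0 : c ≠ 0 := by simp [hc, ht]
    have hctop : c ≠ ∞ := ENNReal.ofReal_ne_top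
    set g1 : ℝ → ℝ≥0∞ := fun x => if c / 2 < g x then g x else 0 with hg1
    have hg1m : Measurable g1 := Measurable.ite (measurableSet_lt measurable_const hgm) hgm
      measurable_const
    -- sublinearity : mx g ≤ mx g1 + c/2
    have hsub : ∀ x, mx g x ≤ mx g1 x + c / 2 := by
      intro x
      rw [mx]
      refine iSup₂_le fun y hy => ?_
      set D := ENNReal.ofReal |x - y| with hD
      have hD0 : D ≠ 0 := by
        simp only [hD, ne_eq, ENNReal.ofReal_eq_zero, not_le, abs_pos, sub_ne_zero]
        exact fun e => hy e.symm
      have hsplit : ∀ s, g s = g1 s + (if c / 2 < g s then 0 else g s) := by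
        intro s; by_cases hcase : c / 2 < g s <;> simp [hg1, hcase]
      have hint_split : (∫⁻ s in Set.uIoc x y, g s)
          = (∫⁻ s in Set.uIoc x y, g1 s) + ∫⁻ s in Set.uIoc x y,
              (if c / 2 < g s then 0 else g s) := by
        rw [← lintegral_add_left hg1m]
        congr 1; funext s; exact hsplit s
      rw [hint_split, ENNReal.add_div]
      have hterm1 : (∫⁻ s in Set.uIoc x y, g1 s) / D ≤ mx g1 x := by
        rw [mx]
        exact le_iSup₂ (f := fun (z : ℝ) (_ : z ≠ x) =>
          (∫⁻ s in Set.uIoc x z, g1 s) / ENNReal.ofReal |x - z|) y hy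
      have hterm2 : (∫⁻ s in Set.uIoc x y, (if c / 2 < g s then 0 else g s)) / D ≤ c / 2 := by
        have hb : (∫⁻ s in Set.uIoc x y, (if c / 2 < g s then 0 else g s))
            ≤ (c / 2) * D := by
          have hvol : volume (Set.uIoc x y) = D := by
            rw [Set.uIoc, Real.volume_Ioc, hD]
            congr 1
            rw [max_sub_min_eq_abs, abs_sub_comm]
          calc (∫⁻ s in Set.uIoc x y, (if c / 2 < g s then 0 else g s))
              ≤ ∫⁻ _ in Set.uIoc x y, c / 2 := by
                refine lintegral_mono fun s => ?_
                by_cases hcase : c / 2 < g s <;> simp [hcase]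
                exact le_of_not_gt hcase
            _ = (c / 2) * D := by rw [setLIntegral_const, hvol]
        calc (∫⁻ s in Set.uIoc x y, (if c / 2 < g s then 0 else g s)) / D
            ≤ ((c / 2) * D) / D := by gcongr
          _ = (c / 2) * (D / D) := by rw [mul_div_assoc]
          _ ≤ (c / 2) * 1 := by gcongr; exact ENNReal.div_self_le_one
          _ = c / 2 := mul_one _
      exact add_le_add hterm1 hterm2
    -- subset
    have hset : {x | c < mx g x} ⊆ {x | c / 2 < mx g1 x} := by
      intro x hx
      simp only [mem_setOf_eq] at hx ⊢
      by_contra hcon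
      push_neg at hcon
      have : mx g x ≤ c / 2 + c / 2 := le_trans (hsub x) (add_le_add hcon le_rfl)
      rw [ENNReal.add_halves] at this
      exact absurd hx (not_lt.2 this)
    have hweak := weak_bound g1 hg1m (c / 2)
    have h4 : (4:ℝ≥0∞) * (c / 2) = 2 * c := by
      have h44 : (4:ℝ≥0∞) = 2 * 2 := by norm_num
      rw [h44, mul_assoc, ENNReal.mul_div_cancel two_ne_zero ENNReal.ofNat_ne_top]
    have hof : ENNReal.ofReal (2*t) = 2 * c := by
      rw [ENNReal.ofReal_mul (by norm_num), hc, ENNReal.ofReal_ofNat]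
    calc ENNReal.ofReal (2*t) * volume {x | c < mx g x}
        ≤ 2 * c * volume {x | c / 2 < mx g1 x} := by
          rw [hof]; exact mul_le_mul_right (measure_mono hset) _
      _ = 4 * ((c / 2) * volume {x | c / 2 < mx g1 x}) := by
          rw [← mul_assoc, h4]
      _ ≤ 4 * (4 * ∫⁻ s, g1 s) := mul_le_mul_right hweak _
      _ = 16 * ∫⁻ s, g1 s := by rw [← mul_assoc]; norm_num
  calc ∫⁻ t in Ioi (0:ℝ), ENNReal.ofReal (2*t) * volume {x | ENNReal.ofReal t < mx g x}
      ≤ ∫⁻ t in Ioi (0:ℝ), 16 * ∫⁻ x, (if ENNReal.ofReal t / 2 < g x then g x else 0) := by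
        refine lintegral_mono_ae ?_
        filter_upwards [ae_restrict_mem measurableSet_Ioi] with t ht
        exact main t ht
    _ = 16 * ∫⁻ t in Ioi (0:ℝ), ∫⁻ x, (if ENNReal.ofReal t / 2 < g x then g x else 0) := by
        rw [← lintegral_const_mul' _ _ (by norm_num)]
    _ = 16 * ∫⁻ x, ∫⁻ t in Ioi (0:ℝ), (if ENNReal.ofReal t / 2 < g x then g x else 0) := by
        congr 1
        rw [lintegral_lintegral_swap]
        have hSet : MeasurableSet {p : ℝ × ℝ | ENNReal.ofReal p.1 / 2 < g p.2} :=
          measurableSet_lt ((ENNReal.measurable_ofReal.comp measurable_fst).div measurable_const)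
            (hgm.comp measurable_snd)
        have : (Function.uncurry fun t x =>
            if ENNReal.ofReal t / 2 < g x then g x else 0)
            = {p : ℝ × ℝ | ENNReal.ofReal p.1 / 2 < g p.2}.indicator (fun p => g p.2) := by
          funext p
          cases p with
          | mk t x => rw [Set.indicator_apply]; rfl
        rw [this]
        exact ((hgm.comp measurable_snd).indicator hSet).aemeasurable
    _ = 16 * ∫⁻ x, g x * (2 * g x) := by
        congr 1
        refine lintegral_congr fun x => ?_
        have hindic : (fun s : ℝ => if ENNReal.ofReal s / 2 < g x then g x else 0)
            = {s : ℝ | ENNReal.ofReal s / 2 < g x}.indicator (fun _ => g x) := by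
          funext s; rw [Set.indicator_apply]; rfl
        rw [hindic, lintegral_indicator_const
          (measurableSet_lt (f := fun s : ℝ => ENNReal.ofReal s / 2)
            (ENNReal.measurable_ofReal.div measurable_const) measurable_const)]
        congr 1
        rw [Measure.restrict_apply
          (measurableSet_lt (f := fun s : ℝ => ENNReal.ofReal s / 2)
            (ENNReal.measurable_ofReal.div measurable_const) measurable_const)]
        have hseteq : {s : ℝ | ENNReal.ofReal s / 2 < g x} ∩ Ioi 0
            = {s : ℝ | s ∈ Ioi (0:ℝ) ∧ ENNReal.ofReal s < 2 * g x} := by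
          ext s
          simp only [mem_inter_iff, mem_setOf_eq, mem_Ioi]
          rw [ENNReal.div_lt_iff (Or.inl two_ne_zero) (Or.inl ENNReal.ofNat_ne_top), mul_comm]
          tauto
        rw [hseteq, meas_lt_ofReal]
    _ = 32 * ∫⁻ x, (g x) ^ 2 := by
        rw [← lintegral_const_mul' _ _ (by norm_num : (32:ℝ≥0∞) ≠ ∞),
          ← lintegral_const_mul' _ _ (by norm_num : (16:ℝ≥0∞) ≠ ∞)]
        refine lintegral_congr fun x => ?_
        rw [pow_two]; ring

/-- there is a universal `C > 0` with
`∫ (sup_{β ≠ α} |f(α) − f(β)|/|α − β|)² dα ≤ C‖f'‖_{L²}²` for every Schwartz `f`. -/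
theorem statement4 : ∃ C : ℝ, 0 < C ∧ ∀ f : SchwartzMap ℝ ℂ,
    (∫⁻ α : ℝ, (⨆ (β : ℝ) (_ : β ≠ α),
        ENNReal.ofReal (‖f α - f β‖ / |α - β|)) ^ 2)
      ≤ ENNReal.ofReal C * eLpNorm (deriv (⇑f)) 2 volume ^ 2 := by
  refine ⟨32, by norm_num, fun f => ?_⟩
  have hdf : ⇑(SchwartzMap.derivCLM ℝ ℂ f) = deriv (⇑f) :=
    funext fun x => SchwartzMap.derivCLM_apply ℝ f x
  have hdc : Continuous (deriv (⇑f)) := hdf ▸ (SchwartzMap.derivCLM ℝ ℂ f).continuous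
  have hdi : Integrable (deriv (⇑f)) volume := hdf ▸ (SchwartzMap.derivCLM ℝ ℂ f).integrable
  set r : ℝ → ℝ := fun t => ‖deriv (⇑f) t‖ with hrdef
  have hr : Continuous r := hdc.norm
  have hint : Integrable r volume := hdi.norm
  have hnn : ∀ t, 0 ≤ r t := fun t => norm_nonneg _
  set g : ℝ → ℝ≥0∞ := fun t => ENNReal.ofReal (r t) with hgdef
  -- pointwise bound
  have hpt : ∀ α : ℝ, (⨆ (β : ℝ) (_ : β ≠ α),
      ENNReal.ofReal (‖f α - f β‖ / |α - β|)) ≤ mx g α := by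
    intro α
    refine iSup₂_le fun β hβ => ?_
    have habs : 0 < |α - β| := by
      rw [abs_pos, sub_ne_zero]; exact fun e => hβ e.symm
    rw [ENNReal.ofReal_div_of_pos habs]
    have hftc : f α - f β = ∫ t in β..α, deriv (⇑f) t := by
      rw [intervalIntegral.integral_deriv_eq_sub (fun x _ => f.differentiableAt)
        (hdi.intervalIntegrable)]
    have h1 : ‖∫ t in β..α, deriv (⇑f) t‖ = ‖∫ t in Set.uIoc β α, deriv (⇑f) t‖ :=
      intervalIntegral.norm_intervalIntegral_eq _ _ _ _
    have hnum : ENNReal.ofReal ‖f α - f β‖ ≤ ∫⁻ t in Set.uIoc α β, g t := by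
      calc ENNReal.ofReal ‖f α - f β‖
          = ENNReal.ofReal ‖∫ t in Set.uIoc α β, deriv (⇑f) t‖ := by
            rw [hftc, h1, Set.uIoc_comm β α]
        _ = (‖∫ t in Set.uIoc α β, deriv (⇑f) t‖₊ : ℝ≥0∞) := ofReal_norm _
        _ ≤ ∫⁻ t in Set.uIoc α β, (‖deriv (⇑f) t‖₊ : ℝ≥0∞) :=
            enorm_integral_le_lintegral_enorm _
        _ = ∫⁻ t in Set.uIoc α β, g t := by
            refine lintegral_congr fun t => ?_
            simp only [hgdef, hrdef]
            exact (ofReal_norm _).symm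
    refine le_trans (ENNReal.div_le_div_right hnum _) ?_
    rw [mx]
    exact le_iSup₂ (f := fun (y : ℝ) (_ : y ≠ α) =>
      (∫⁻ t in Set.uIoc α y, g t) / ENNReal.ofReal |α - y|) β hβ
  -- eLpNorm identity
  have hsn : ENNReal.ofReal 32 * eLpNorm (deriv (⇑f)) 2 volume ^ 2
      = 32 * ∫⁻ x, (g x) ^ 2 := by
    rw [ENNReal.ofReal_ofNat]
    congr 1
    rw [eLpNorm_eq_lintegral_rpow_enorm_toReal two_ne_zero ENNReal.ofNat_ne_top]
    have h2 : ((2:ℝ≥0∞)).toReal = 2 := by simp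
    rw [h2, ← ENNReal.rpow_natCast _ 2, ← ENNReal.rpow_mul]
    have h3 : (1 / 2 * ((2:ℕ):ℝ)) = 1 := by norm_num
    rw [h3, ENNReal.rpow_one]
    refine lintegral_congr fun x => ?_
    simp only [hgdef, hrdef]
    rw [ofReal_norm, ← ENNReal.rpow_natCast]
    norm_num
  calc (∫⁻ α : ℝ, (⨆ (β : ℝ) (_ : β ≠ α),
        ENNReal.ofReal (‖f α - f β‖ / |α - β|)) ^ 2)
      ≤ ∫⁻ α : ℝ, (mx g α) ^ 2 := by
        refine lintegral_mono fun α => ?_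
        exact pow_le_pow_left' (hpt α) 2
    _ ≤ 32 * ∫⁻ x, (g x) ^ 2 := strong_bound r hr hint hnn
    _ = ENNReal.ofReal 32 * eLpNorm (deriv (⇑f)) 2 volume ^ 2 := hsn.symm

end
end

section
/- There exists a universal constant C > 0 such that for all complex-valued Schwartz functions f, g ∈ 𝒮(ℝ), the function T(α) := (1/π) ∫_ℝ ((f(α) − f(β))/(α − β))·g(β) dβ (the integral converging absolutely for each α) satisfies ‖T‖_{L²(ℝ)} ≤ C·‖f'‖_{L²(ℝ)}·‖g‖_{L¹(ℝ)}. -/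
set_option maxHeartbeats 1000000


open MeasureTheory Complex
open scoped ENNReal NNReal

noncomputable section

namespace Statement6Aux

lemma hsq (x : ℝ≥0∞) : x ^ ((1:ℝ)/2) * x ^ ((1:ℝ)/2) = x := by
  rw [← ENNReal.rpow_add_of_nonneg _ _ (by norm_num) (by norm_num)]
  norm_num

lemma hsq' (x : ℝ≥0∞) : (x ^ ((1:ℝ)/2)) ^ (2:ℝ) = x := by
  rw [← ENNReal.rpow_mul]
  norm_num

/-- Scaling of Lebesgue integral under `α ↦ t•α + c`. -/
lemma lint_scale (F : ℝ → ℝ≥0∞) (hF : Measurable F) {t : ℝ} (ht : 0 < t) (c : ℝ) :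
    ∫⁻ α : ℝ, F (t * α + c) = ENNReal.ofReal t⁻¹ * ∫⁻ x, F x := by
  have hmeas : Measurable fun α : ℝ => t * α + c := by fun_prop
  have hmap : Measure.map (fun α : ℝ => t * α + c) volume
      = ENNReal.ofReal |t⁻¹| • volume := by
    have hco : (fun α : ℝ => t * α + c) = (fun x : ℝ => x + c) ∘ (fun α : ℝ => t * α) := rfl
    rw [hco, ← Measure.map_map (by fun_prop) (by fun_prop),
      Real.map_volume_mul_left ht.ne', Measure.map_smul, map_add_right_eq_self]
  calc ∫⁻ α : ℝ, F (t * α + c)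
      = ∫⁻ y, F y ∂(Measure.map (fun α : ℝ => t * α + c) volume) :=
        (lintegral_map hF hmeas).symm
    _ = ENNReal.ofReal t⁻¹ * ∫⁻ x, F x := by
        rw [hmap, lintegral_smul_measure, abs_of_pos (inv_pos.mpr ht), smul_eq_mul]

lemma lint_rpow_neg_half :
    ∫⁻ t in Set.Ioc (0:ℝ) 1, ENNReal.ofReal (t ^ (-(1/2) : ℝ)) = ENNReal.ofReal 2 := by
  have hi : IntegrableOn (fun t : ℝ => t ^ (-(1/2) : ℝ)) (Set.Ioc (0:ℝ) 1) := by
    have := intervalIntegral.intervalIntegrable_rpow' (a := (0:ℝ)) (b := 1)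
      (r := -(1/2)) (by norm_num)
    rwa [intervalIntegrable_iff_integrableOn_Ioc_of_le zero_le_one] at this
  have hnn : 0 ≤ᵐ[volume.restrict (Set.Ioc (0:ℝ) 1)] fun t : ℝ => t ^ (-(1/2) : ℝ) := by
    filter_upwards [ae_restrict_mem measurableSet_Ioc] with t ht
    exact Real.rpow_nonneg ht.1.le _
  rw [← ofReal_integral_eq_lintegral_ofReal hi hnn]
  congr 1
  rw [← intervalIntegral.integral_of_le zero_le_one,
    integral_rpow (Or.inl (by norm_num))]
  rw [Real.one_rpow, Real.zero_rpow (by norm_num)]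
  norm_num

/-- FTC representation of the difference quotient. -/
lemma ftc_rep (f : SchwartzMap ℝ ℂ) {α β : ℝ} (h : α ≠ β) :
    (f α - f β) / ((α - β : ℝ) : ℂ) = ∫ t in (0:ℝ)..1, deriv f (β + t * (α - β)) := by
  have hsub : (α - β : ℝ) ≠ 0 := sub_ne_zero.mpr h
  have hFc : Continuous (deriv (⇑f)) := (f.smooth ⊤).continuous_deriv (by exact_mod_cast le_top)
  have key : ∀ t : ℝ, HasDerivAt (fun s : ℝ => f (β + s * (α - β)))
      ((α - β) • deriv f (β + t * (α - β))) t := by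
    intro t
    have h1 : HasDerivAt (fun s : ℝ => β + s * (α - β)) (α - β) t := by
      simpa using ((hasDerivAt_id t).mul_const (α - β)).const_add β
    have h2 : HasDerivAt f (deriv f (β + t * (α - β))) (β + t * (α - β)) :=
      (f.differentiable.differentiableAt).hasDerivAt
    exact h2.scomp t h1
  have hi : IntervalIntegrable (fun t : ℝ => (α - β) • deriv f (β + t * (α - β)))
      volume 0 1 := by
    apply Continuous.intervalIntegrable
    exact ((hFc.comp (by continuity))).const_smul (α - β : ℝ)
  have hFTC := intervalIntegral.integral_eq_sub_of_hasDerivAt (fun t _ => key t) hi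
  have e1 : β + 1 * (α - β) = α := by ring
  have e0 : β + 0 * (α - β) = β := by ring
  rw [e1, e0, intervalIntegral.integral_smul] at hFTC
  rw [div_eq_iff (by exact_mod_cast hsub : ((α - β : ℝ) : ℂ) ≠ 0)]
  rw [← hFTC, Complex.real_smul, mul_comm]

/-- Hardy-type inequality for the difference quotient. -/
lemma hardy (f : SchwartzMap ℝ ℂ) (β : ℝ) :
    ∫⁻ α : ℝ, (‖(f α - f β) / ((α - β : ℝ) : ℂ)‖₊ : ℝ≥0∞) ^ (2:ℝ)
      ≤ 4 * ∫⁻ x : ℝ, (‖deriv f x‖₊ : ℝ≥0∞) ^ (2:ℝ) := by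
  have hFc : Continuous (deriv (⇑f)) := (f.smooth ⊤).continuous_deriv (by exact_mod_cast le_top)
  set IF := ∫⁻ x : ℝ, (‖deriv f x‖₊ : ℝ≥0∞) ^ (2:ℝ) with hIFdef
  -- Step 1: pointwise Cauchy-Schwarz bound for α ≠ β
  have step1 : ∀ α : ℝ, α ≠ β →
      (‖(f α - f β) / ((α - β : ℝ) : ℂ)‖₊ : ℝ≥0∞) ^ (2:ℝ)
      ≤ ENNReal.ofReal 2 * ∫⁻ t in Set.Ioc (0:ℝ) 1,
          ENNReal.ofReal (t ^ ((1:ℝ)/2)) * (‖deriv f (β + t * (α - β))‖₊ : ℝ≥0∞) ^ (2:ℝ) := by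
    intro α hα
    set n : ℝ → ℝ≥0∞ := fun t => (‖deriv f (β + t * (α - β))‖₊ : ℝ≥0∞) with hn
    have hnm : Measurable n :=
      ((hFc.comp (by continuity)).measurable.nnnorm).coe_nnreal_ennreal
    have h1 : (‖(f α - f β) / ((α - β : ℝ) : ℂ)‖₊ : ℝ≥0∞)
        ≤ ∫⁻ t in Set.Ioc (0:ℝ) 1, n t := by
      rw [ftc_rep f hα, intervalIntegral.integral_of_le zero_le_one]
      exact enorm_integral_le_lintegral_enorm _
    set a : ℝ → ℝ≥0∞ := fun t => ENNReal.ofReal (t ^ (-(1/4) : ℝ)) with ha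
    set b : ℝ → ℝ≥0∞ := fun t => ENNReal.ofReal (t ^ ((1/4) : ℝ)) * n t with hb
    have ham : Measurable a := (measurable_id.pow measurable_const).ennreal_ofReal
    have hbm : Measurable b :=
      ((measurable_id.pow measurable_const).ennreal_ofReal).mul hnm
    have hcongr : ∫⁻ t in Set.Ioc (0:ℝ) 1, n t = ∫⁻ t in Set.Ioc (0:ℝ) 1, (a * b) t := by
      apply setLIntegral_congr_fun measurableSet_Ioc
      intro t ht
      have hone : a t * ENNReal.ofReal (t ^ ((1/4) : ℝ)) = 1 := by
        rw [ha, ← ENNReal.ofReal_mul (Real.rpow_nonneg ht.1.le _),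
          ← Real.rpow_add ht.1]
        norm_num
      simp only [Pi.mul_apply, hb, ← mul_assoc, hone, one_mul]
    have holder := ENNReal.lintegral_mul_le_Lp_mul_Lq
      (volume.restrict (Set.Ioc (0:ℝ) 1))
      (⟨by norm_num, by norm_num, by norm_num⟩ : Real.HolderConjugate 2 2)
      ham.aemeasurable hbm.aemeasurable
    have ha2 : ∫⁻ t in Set.Ioc (0:ℝ) 1, a t ^ (2:ℝ) = ENNReal.ofReal 2 := by
      rw [← lint_rpow_neg_half]
      apply setLIntegral_congr_fun measurableSet_Ioc
      intro t ht
      simp only [ha]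
      rw [ENNReal.ofReal_rpow_of_nonneg (Real.rpow_nonneg ht.1.le _) (by norm_num),
        ← Real.rpow_mul ht.1.le]
      norm_num
    have hb2 : ∫⁻ t in Set.Ioc (0:ℝ) 1, b t ^ (2:ℝ)
        = ∫⁻ t in Set.Ioc (0:ℝ) 1, ENNReal.ofReal (t ^ ((1:ℝ)/2)) * n t ^ (2:ℝ) := by
      apply setLIntegral_congr_fun measurableSet_Ioc
      intro t ht
      simp only [hb]
      rw [ENNReal.mul_rpow_of_nonneg _ _ (by norm_num : (0:ℝ) ≤ 2),
        ENNReal.ofReal_rpow_of_nonneg (Real.rpow_nonneg ht.1.le _) (by norm_num),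
        ← Real.rpow_mul ht.1.le]
      norm_num
    calc (‖(f α - f β) / ((α - β : ℝ) : ℂ)‖₊ : ℝ≥0∞) ^ (2:ℝ)
        ≤ (∫⁻ t in Set.Ioc (0:ℝ) 1, n t) ^ (2:ℝ) :=
          ENNReal.rpow_le_rpow h1 (by norm_num)
      _ = (∫⁻ t in Set.Ioc (0:ℝ) 1, (a * b) t) ^ (2:ℝ) := by rw [hcongr]
      _ ≤ ((∫⁻ t in Set.Ioc (0:ℝ) 1, a t ^ (2:ℝ)) ^ ((1:ℝ)/2)
            * (∫⁻ t in Set.Ioc (0:ℝ) 1, b t ^ (2:ℝ)) ^ ((1:ℝ)/2)) ^ (2:ℝ) :=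
          ENNReal.rpow_le_rpow holder (by norm_num)
      _ = (∫⁻ t in Set.Ioc (0:ℝ) 1, a t ^ (2:ℝ))
            * ∫⁻ t in Set.Ioc (0:ℝ) 1, b t ^ (2:ℝ) := by
          rw [ENNReal.mul_rpow_of_nonneg _ _ (by norm_num : (0:ℝ) ≤ 2), hsq', hsq']
      _ = ENNReal.ofReal 2 * ∫⁻ t in Set.Ioc (0:ℝ) 1,
            ENNReal.ofReal (t ^ ((1:ℝ)/2)) * n t ^ (2:ℝ) := by rw [ha2, hb2]
  -- Step 2: integrate in α, swap, scale
  have hae : ∀ᵐ α : ℝ, α ≠ β := by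
    have hs : {a : ℝ | ¬ a ≠ β} = {β} := by ext a; simp
    rw [ae_iff, hs]
    exact measure_singleton β
  have hswap : ∫⁻ α : ℝ, ∫⁻ t in Set.Ioc (0:ℝ) 1,
        ENNReal.ofReal (t ^ ((1:ℝ)/2)) * (‖deriv f (β + t * (α - β))‖₊ : ℝ≥0∞) ^ (2:ℝ)
      = ∫⁻ t in Set.Ioc (0:ℝ) 1, ∫⁻ α : ℝ,
        ENNReal.ofReal (t ^ ((1:ℝ)/2)) * (‖deriv f (β + t * (α - β))‖₊ : ℝ≥0∞) ^ (2:ℝ) := by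
    apply lintegral_lintegral_swap
    have m1 : Measurable fun p : ℝ × ℝ => ENNReal.ofReal (p.2 ^ ((1:ℝ)/2)) :=
      (measurable_snd.pow measurable_const).ennreal_ofReal
    have m2 : Measurable fun p : ℝ × ℝ =>
        (‖deriv f (β + p.2 * (p.1 - β))‖₊ : ℝ≥0∞) ^ (2:ℝ) :=
      ((((hFc.comp (by continuity)).measurable).nnnorm).coe_nnreal_ennreal).pow
        measurable_const
    exact (m1.mul m2).aemeasurable
  have hinner : ∫⁻ t in Set.Ioc (0:ℝ) 1, ∫⁻ α : ℝ,
        ENNReal.ofReal (t ^ ((1:ℝ)/2)) * (‖deriv f (β + t * (α - β))‖₊ : ℝ≥0∞) ^ (2:ℝ)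
      = ENNReal.ofReal 2 * IF := by
    have heval : ∫⁻ t in Set.Ioc (0:ℝ) 1, ∫⁻ α : ℝ,
          ENNReal.ofReal (t ^ ((1:ℝ)/2)) * (‖deriv f (β + t * (α - β))‖₊ : ℝ≥0∞) ^ (2:ℝ)
        = ∫⁻ t in Set.Ioc (0:ℝ) 1, ENNReal.ofReal (t ^ (-(1/2) : ℝ)) * IF := by
      apply setLIntegral_congr_fun measurableSet_Ioc
      intro t ht
      beta_reduce
      rw [lintegral_const_mul' _ _ ENNReal.ofReal_ne_top]
      have harg : ∀ α : ℝ, β + t * (α - β) = t * α + (β - t * β) := fun α => by ring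
      simp_rw [harg]
      rw [lint_scale (fun x => (‖deriv f x‖₊ : ℝ≥0∞) ^ (2:ℝ))
        ((hFc.measurable.nnnorm.coe_nnreal_ennreal).pow measurable_const) ht.1]
      rw [← mul_assoc, ← ENNReal.ofReal_mul (Real.rpow_nonneg ht.1.le _)]
      congr 2
      rw [← Real.rpow_neg_one t, ← Real.rpow_add ht.1]
      norm_num
    rw [heval, lintegral_mul_const _ ((measurable_id'.pow measurable_const).ennreal_ofReal),
      lint_rpow_neg_half]
  calc ∫⁻ α : ℝ, (‖(f α - f β) / ((α - β : ℝ) : ℂ)‖₊ : ℝ≥0∞) ^ (2:ℝ)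
      ≤ ∫⁻ α : ℝ, ENNReal.ofReal 2 * ∫⁻ t in Set.Ioc (0:ℝ) 1,
          ENNReal.ofReal (t ^ ((1:ℝ)/2)) * (‖deriv f (β + t * (α - β))‖₊ : ℝ≥0∞) ^ (2:ℝ) :=
        lintegral_mono_ae (hae.mono step1)
    _ = ENNReal.ofReal 2 * ∫⁻ α : ℝ, ∫⁻ t in Set.Ioc (0:ℝ) 1,
          ENNReal.ofReal (t ^ ((1:ℝ)/2)) * (‖deriv f (β + t * (α - β))‖₊ : ℝ≥0∞) ^ (2:ℝ) :=
        lintegral_const_mul' _ _ ENNReal.ofReal_ne_top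
    _ = ENNReal.ofReal 2 * (ENNReal.ofReal 2 * IF) := by rw [hswap, hinner]
    _ = 4 * IF := by
        rw [← mul_assoc, ← ENNReal.ofReal_mul (by norm_num)]
        norm_num

/-- Absolute convergence of the commutator integral. -/
lemma integrable_K (f g : SchwartzMap ℝ ℂ) (α : ℝ) :
    Integrable (fun β : ℝ => (f α - f β) / ((α - β : ℝ) : ℂ) * g β) := by
  obtain ⟨L, hL0, hL⟩ : ∃ L : ℝ, 0 ≤ L ∧ ∀ x y : ℝ, ‖f x - f y‖ ≤ L * ‖x - y‖ := by
    refine ⟨(SchwartzMap.seminorm ℝ 0 0) (SchwartzMap.derivCLM ℝ ℂ f),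
      apply_nonneg _ _, fun x y => ?_⟩
    have hbound : ∀ z : ℝ, ‖deriv f z‖ ≤ (SchwartzMap.seminorm ℝ 0 0) (SchwartzMap.derivCLM ℝ ℂ f) := by
      intro z
      have := SchwartzMap.norm_le_seminorm ℝ (SchwartzMap.derivCLM ℝ ℂ f) z
      rwa [SchwartzMap.derivCLM_apply] at this
    exact (convex_univ : Convex ℝ (Set.univ : Set ℝ)).norm_image_sub_le_of_norm_deriv_le
      (fun z _ => f.differentiable.differentiableAt) (fun z _ => hbound z)
      (Set.mem_univ y) (Set.mem_univ x)
  have hm : AEStronglyMeasurable (fun β : ℝ => (f α - f β) / ((α - β : ℝ) : ℂ) * g β) volume := by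
    apply Measurable.aestronglyMeasurable
    exact ((measurable_const.sub f.continuous.measurable).div
      (Complex.measurable_ofReal.comp (measurable_const.sub measurable_id))).mul
      g.continuous.measurable
  apply Integrable.mono' ((g.integrable).norm.const_mul L) hm
  filter_upwards with β
  rw [norm_mul, norm_div]
  by_cases hβ : α = β
  · simp only [hβ, sub_self]
    simp
    positivity
  · have hpos : 0 < ‖((α - β : ℝ) : ℂ)‖ := by
      rw [norm_pos_iff]
      exact_mod_cast sub_ne_zero.mpr hβ
    have h1 : ‖f α - f β‖ / ‖((α - β : ℝ) : ℂ)‖ ≤ L := by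
      rw [div_le_iff₀ hpos, Complex.norm_real]
      exact hL α β
    exact mul_le_mul_of_nonneg_right h1 (norm_nonneg _)

end Statement6Aux

open Statement6Aux in
/-- commutator estimate: there is a universal `C > 0` so that for Schwartz
`f, g`, the function `T(α) = (1/π) ∫ ((f(α) − f(β))/(α − β)) g(β) dβ` (absolutely
convergent) satisfies `‖T‖_{L²} ≤ C‖f'‖_{L²}‖g‖_{L¹}`. -/
theorem statement6 : ∃ C : ℝ, 0 < C ∧ ∀ f g : SchwartzMap ℝ ℂ,
    (∀ α : ℝ, Integrable (fun β : ℝ => (f α - f β) / ((α - β : ℝ) : ℂ) * g β)) ∧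
    eLpNorm (fun α : ℝ => ((1 / Real.pi : ℝ) : ℂ) *
        ∫ β : ℝ, (f α - f β) / ((α - β : ℝ) : ℂ) * g β) 2 volume
      ≤ ENNReal.ofReal C * eLpNorm (deriv (⇑f)) 2 volume * eLpNorm (⇑g) 1 volume := by
  refine ⟨2, two_pos, fun f g => ⟨integrable_K f g, ?_⟩⟩
  have hFc : Continuous (deriv (⇑f)) := (f.smooth ⊤).continuous_deriv (by exact_mod_cast le_top)
  set IF := ∫⁻ x : ℝ, (‖deriv f x‖₊ : ℝ≥0∞) ^ (2:ℝ) with hIFdef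
  set Gg : ℝ → ℝ≥0∞ := fun β => (‖g β‖₊ : ℝ≥0∞) with hGgdef
  set N1 := ∫⁻ β : ℝ, Gg β with hN1def
  set H : ℝ → ℝ → ℝ≥0∞ :=
    fun α β => (‖(f α - f β) / ((α - β : ℝ) : ℂ)‖₊ : ℝ≥0∞) with hHdef
  have hGm : Measurable Gg := g.continuous.measurable.nnnorm.coe_nnreal_ennreal
  have hKm : Measurable fun p : ℝ × ℝ => (f p.1 - f p.2) / ((p.1 - p.2 : ℝ) : ℂ) := by
    exact ((f.continuous.comp continuous_fst).sub (f.continuous.comp continuous_snd)).measurable.div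
      (Complex.measurable_ofReal.comp (continuous_fst.sub continuous_snd).measurable)
  have hHm : Measurable fun p : ℝ × ℝ => H p.1 p.2 :=
    hKm.nnnorm.coe_nnreal_ennreal
  have hHαm : ∀ α, Measurable fun β => H α β := fun α =>
    ((measurable_const.sub f.continuous.measurable).div
      (Complex.measurable_ofReal.comp (measurable_const.sub measurable_id))).nnnorm.coe_nnreal_ennreal
  have hHβm : ∀ β, Measurable fun α => H α β := fun β =>
    ((f.continuous.measurable.sub measurable_const).div
      (Complex.measurable_ofReal.comp (measurable_id.sub measurable_const))).nnnorm.coe_nnreal_ennreal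
  have hN1top : N1 ≠ ⊤ := by
    have h := (g.integrable (μ := volume)).2
    exact h.ne
  -- pointwise bound on T
  have hTle : ∀ α : ℝ,
      (‖((1 / Real.pi : ℝ) : ℂ) * ∫ β : ℝ, (f α - f β) / ((α - β : ℝ) : ℂ) * g β‖₊ : ℝ≥0∞)
        ≤ ∫⁻ β : ℝ, H α β * Gg β := by
    intro α
    have hc1 : (‖((1 / Real.pi : ℝ) : ℂ)‖₊ : ℝ≥0∞) ≤ 1 := by
      have hc : ‖((1 / Real.pi : ℝ) : ℂ)‖ ≤ 1 := by
        rw [Complex.norm_real, Real.norm_eq_abs, _root_.abs_of_nonneg (by positivity)]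
        rw [div_le_one Real.pi_pos]
        linarith [Real.pi_gt_three]
      exact_mod_cast hc
    calc (‖((1 / Real.pi : ℝ) : ℂ) * ∫ β : ℝ, (f α - f β) / ((α - β : ℝ) : ℂ) * g β‖₊ : ℝ≥0∞)
        = (‖((1 / Real.pi : ℝ) : ℂ)‖₊ : ℝ≥0∞)
            * (‖∫ β : ℝ, (f α - f β) / ((α - β : ℝ) : ℂ) * g β‖₊ : ℝ≥0∞) := by
          rw [nnnorm_mul, ENNReal.coe_mul]
      _ ≤ 1 * (‖∫ β : ℝ, (f α - f β) / ((α - β : ℝ) : ℂ) * g β‖₊ : ℝ≥0∞) :=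
          mul_le_mul_left hc1 _
      _ = (‖∫ β : ℝ, (f α - f β) / ((α - β : ℝ) : ℂ) * g β‖₊ : ℝ≥0∞) := one_mul _
      _ ≤ ∫⁻ β : ℝ, (‖(f α - f β) / ((α - β : ℝ) : ℂ) * g β‖₊ : ℝ≥0∞) :=
          enorm_integral_le_lintegral_enorm _
      _ = ∫⁻ β : ℝ, H α β * Gg β := by
          apply lintegral_congr
          intro β
          rw [nnnorm_mul, ENNReal.coe_mul]
  -- Cauchy-Schwarz in β
  have stepB : ∀ α : ℝ, (∫⁻ β : ℝ, H α β * Gg β) ^ (2:ℝ)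
      ≤ N1 * ∫⁻ β : ℝ, H α β ^ (2:ℝ) * Gg β := by
    intro α
    set a : ℝ → ℝ≥0∞ := fun β => Gg β ^ ((1:ℝ)/2) with ha
    set b : ℝ → ℝ≥0∞ := fun β => H α β * Gg β ^ ((1:ℝ)/2) with hb
    have ham : Measurable a := hGm.pow measurable_const
    have hbm : Measurable b := (hHαm α).mul (hGm.pow measurable_const)
    have hcongr : ∫⁻ β : ℝ, H α β * Gg β = ∫⁻ β : ℝ, (a * b) β := by
      apply lintegral_congr
      intro β
      simp only [Pi.mul_apply, ha, hb]
      calc H α β * Gg β = H α β * (Gg β ^ ((1:ℝ)/2) * Gg β ^ ((1:ℝ)/2)) := by rw [hsq]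
        _ = Gg β ^ ((1:ℝ)/2) * (H α β * Gg β ^ ((1:ℝ)/2)) := by ring
    have holder := ENNReal.lintegral_mul_le_Lp_mul_Lq (volume : Measure ℝ)
      (⟨by norm_num, by norm_num, by norm_num⟩ : Real.HolderConjugate 2 2)
      ham.aemeasurable hbm.aemeasurable
    have ha2 : ∫⁻ β : ℝ, a β ^ (2:ℝ) = N1 := by
      apply lintegral_congr
      intro β
      rw [ha, hsq']
    have hb2 : ∫⁻ β : ℝ, b β ^ (2:ℝ) = ∫⁻ β : ℝ, H α β ^ (2:ℝ) * Gg β := by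
      apply lintegral_congr
      intro β
      rw [hb, ENNReal.mul_rpow_of_nonneg _ _ (by norm_num : (0:ℝ) ≤ 2), hsq']
    calc (∫⁻ β : ℝ, H α β * Gg β) ^ (2:ℝ)
        = (∫⁻ β : ℝ, (a * b) β) ^ (2:ℝ) := by rw [hcongr]
      _ ≤ ((∫⁻ β : ℝ, a β ^ (2:ℝ)) ^ ((1:ℝ)/2) * (∫⁻ β : ℝ, b β ^ (2:ℝ)) ^ ((1:ℝ)/2)) ^ (2:ℝ) :=
          ENNReal.rpow_le_rpow holder (by norm_num)
      _ = (∫⁻ β : ℝ, a β ^ (2:ℝ)) * ∫⁻ β : ℝ, b β ^ (2:ℝ) := by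
          rw [ENNReal.mul_rpow_of_nonneg _ _ (by norm_num : (0:ℝ) ≤ 2), hsq', hsq']
      _ = N1 * ∫⁻ β : ℝ, H α β ^ (2:ℝ) * Gg β := by rw [ha2, hb2]
  -- swap of the double integral
  have hswap : ∫⁻ α : ℝ, ∫⁻ β : ℝ, H α β ^ (2:ℝ) * Gg β
      = ∫⁻ β : ℝ, ∫⁻ α : ℝ, H α β ^ (2:ℝ) * Gg β := by
    apply lintegral_lintegral_swap
    exact ((hHm.pow measurable_const).mul (hGm.comp measurable_snd)).aemeasurable
  -- main key bound
  have key : ∫⁻ α : ℝ,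
      (‖((1 / Real.pi : ℝ) : ℂ) * ∫ β : ℝ, (f α - f β) / ((α - β : ℝ) : ℂ) * g β‖₊ : ℝ≥0∞) ^ (2:ℝ)
      ≤ N1 * (4 * IF * N1) := by
    calc ∫⁻ α : ℝ,
        (‖((1 / Real.pi : ℝ) : ℂ) * ∫ β : ℝ, (f α - f β) / ((α - β : ℝ) : ℂ) * g β‖₊ : ℝ≥0∞) ^ (2:ℝ)
        ≤ ∫⁻ α : ℝ, N1 * ∫⁻ β : ℝ, H α β ^ (2:ℝ) * Gg β := by
          apply lintegral_mono
          intro α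
          exact le_trans (ENNReal.rpow_le_rpow (hTle α) (by norm_num)) (stepB α)
      _ = N1 * ∫⁻ α : ℝ, ∫⁻ β : ℝ, H α β ^ (2:ℝ) * Gg β :=
          lintegral_const_mul' _ _ hN1top
      _ = N1 * ∫⁻ β : ℝ, ∫⁻ α : ℝ, H α β ^ (2:ℝ) * Gg β := by rw [hswap]
      _ = N1 * ∫⁻ β : ℝ, (∫⁻ α : ℝ, H α β ^ (2:ℝ)) * Gg β := by
          congr 1
          apply lintegral_congr
          intro β
          exact lintegral_mul_const _ ((hHβm β).pow measurable_const)
      _ ≤ N1 * ∫⁻ β : ℝ, (4 * IF) * Gg β := by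
          apply mul_le_mul_right
          apply lintegral_mono
          intro β
          exact mul_le_mul_left (hardy f β) _
      _ = N1 * (4 * IF * N1) := by rw [lintegral_const_mul _ hGm]
  -- conclude
  rw [eLpNorm_eq_lintegral_rpow_enorm_toReal (by norm_num) (by norm_num),
    eLpNorm_eq_lintegral_rpow_enorm_toReal (p := (2 : ℝ≥0∞)) (by norm_num) (by norm_num),
    eLpNorm_one_eq_lintegral_enorm]
  simp only [ENNReal.toReal_ofNat]
  have hXsq : N1 * (4 * IF * N1)
      = (ENNReal.ofReal 2 * (∫⁻ x : ℝ, (‖deriv f x‖₊ : ℝ≥0∞) ^ (2:ℝ)) ^ ((1:ℝ)/2) * N1) ^ (2:ℝ) := by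
    rw [ENNReal.ofReal_ofNat, ENNReal.rpow_two]
    calc N1 * (4 * IF * N1)
        = (2 * 2) * ((IF ^ ((1:ℝ)/2)) * (IF ^ ((1:ℝ)/2))) * (N1 * N1) := by
          rw [hsq]
          ring
      _ = (2 * IF ^ ((1:ℝ)/2) * N1) ^ 2 := by ring
  calc (∫⁻ α : ℝ,
      (‖((1 / Real.pi : ℝ) : ℂ) * ∫ β : ℝ, (f α - f β) / ((α - β : ℝ) : ℂ) * g β‖₊ : ℝ≥0∞) ^ (2:ℝ))
        ^ ((1:ℝ)/2)
      ≤ (N1 * (4 * IF * N1)) ^ ((1:ℝ)/2) := ENNReal.rpow_le_rpow key (by norm_num)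
    _ = ENNReal.ofReal 2 * (∫⁻ x : ℝ, (‖deriv f x‖₊ : ℝ≥0∞) ^ (2:ℝ)) ^ ((1:ℝ)/2) * N1 := by
        rw [hXsq, ← ENNReal.rpow_mul]
        norm_num
end
end

section
/- There exists a universal constant C > 0 such that for all complex-valued Schwartz functions f, g ∈ 𝒮(ℝ), ‖fg‖_{Ḣ^{1/2}} ≤ C·( ‖f'‖_{L²(ℝ)}·‖g‖_{L²(ℝ)} + ‖f‖_{L^∞(ℝ)}·‖g‖_{Ḣ^{1/2}} ). -/
open MeasureTheory Complex
open scoped ENNReal NNReal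

/-- The homogeneous `Ḣ^{1/2}` seminorm,
`‖u‖_{Ḣ^{1/2}}² = (1/(2π)) ∫∫ |u(α) − u(β)|²/(α − β)² dβ dα`, valued in `[0,∞]`. -/
noncomputable def Hhalf {E : Type*} [NormedAddCommGroup E] (u : ℝ → E) : ℝ≥0∞ :=
  (ENNReal.ofReal (1 / (2 * Real.pi)) *
    ∫⁻ α : ℝ, ∫⁻ β : ℝ, ENNReal.ofReal (‖u α - u β‖ ^ 2 / (α - β) ^ 2)) ^ (1/2 : ℝ)

private lemma sqsqrt (x : ℝ≥0∞) : (x ^ (1/2 : ℝ)) ^ (2:ℕ) = x := by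
  rw [← ENNReal.rpow_natCast _ 2, ← ENNReal.rpow_mul]; norm_num

private lemma L2sq (u : ℝ → ℂ) :
    (eLpNorm u 2 volume) ^ (2:ℕ) = ∫⁻ x, (‖u x‖₊ : ℝ≥0∞) ^ (2:ℕ) := by
  rw [eLpNorm_eq_lintegral_rpow_enorm_toReal two_ne_zero ENNReal.ofNat_ne_top]
  simp only [ENNReal.toReal_ofNat, enorm_eq_nnnorm]
  rw [one_div, ← ENNReal.rpow_natCast _ 2, ← ENNReal.rpow_mul]
  norm_num

private lemma lintegral_scale (F : ℝ → ℝ≥0∞) (hF : Measurable F) {t : ℝ} (ht : t ≠ 0) :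
    ∫⁻ h : ℝ, F (t * h) = ENNReal.ofReal |t⁻¹| * ∫⁻ y, F y := by
  calc ∫⁻ h : ℝ, F (t * h) = ∫⁻ y, F y ∂(Measure.map (t * ·) volume) :=
        (lintegral_map hF (measurable_const_mul t)).symm
    _ = ENNReal.ofReal |t⁻¹| * ∫⁻ y, F y := by
        rw [Real.map_volume_mul_left ht, lintegral_smul_measure, smul_eq_mul]

private lemma step_ftc (f : SchwartzMap ℝ ℂ) (α h : ℝ) :
    ‖f (α + h) - f α‖ ≤ |h| * ∫ t in (0:ℝ)..1, ‖deriv (⇑f) (α + t * h)‖ := by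
  have hdf : Continuous (deriv (⇑f)) := by
    have : deriv (⇑f) = ⇑(SchwartzMap.derivCLM ℝ ℂ f) := by
      ext x; exact (SchwartzMap.derivCLM_apply ℝ f x).symm
    rw [this]; exact (SchwartzMap.derivCLM ℝ ℂ f).continuous
  have hd : ∀ t : ℝ, HasDerivAt (fun t : ℝ => f (α + t * h))
      (h • deriv (⇑f) (α + t * h)) t := by
    intro t
    have h1 : HasDerivAt (fun t : ℝ => α + t * h) h t := by
      simpa using ((hasDerivAt_id t).mul_const h).const_add α
    have h2 : HasDerivAt (⇑f) (deriv (⇑f) (α + t * h)) (α + t * h) :=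
      (f.differentiable.differentiableAt).hasDerivAt
    exact h2.scomp t h1
  have hcont : Continuous fun t : ℝ => h • deriv (⇑f) (α + t * h) :=
    (hdf.comp (by continuity)).const_smul h
  have key : f (α + h) - f α = ∫ t in (0:ℝ)..1, h • deriv (⇑f) (α + t * h) := by
    rw [intervalIntegral.integral_eq_sub_of_hasDerivAt (fun t _ => hd t)
      (hcont.intervalIntegrable _ _)]
    norm_num
  calc ‖f (α + h) - f α‖
      = ‖∫ t in (0:ℝ)..1, h • deriv (⇑f) (α + t * h)‖ := by rw [key]
    _ ≤ ∫ t in (0:ℝ)..1, ‖h • deriv (⇑f) (α + t * h)‖ :=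
        intervalIntegral.norm_integral_le_integral_norm zero_le_one
    _ = ∫ t in (0:ℝ)..1, |h| * ‖deriv (⇑f) (α + t * h)‖ := by
        simp [norm_smul]
    _ = |h| * ∫ t in (0:ℝ)..1, ‖deriv (⇑f) (α + t * h)‖ :=
        intervalIntegral.integral_const_mul _ _

private lemma rpow_int_eq : ∫⁻ t in Set.Ioc (0:ℝ) 1,
    ENNReal.ofReal (t ^ (-(1/2) : ℝ)) = ENNReal.ofReal 2 := by
  have hint : IntegrableOn (fun t : ℝ => t ^ (-(1/2) : ℝ)) (Set.Ioc 0 1) volume := by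
    rw [← intervalIntegrable_iff_integrableOn_Ioc_of_le zero_le_one]
    exact intervalIntegral.intervalIntegrable_rpow' (by norm_num)
  have hnn : 0 ≤ᵐ[volume.restrict (Set.Ioc (0:ℝ) 1)] fun t : ℝ => t ^ (-(1/2) : ℝ) :=
    (ae_restrict_iff' measurableSet_Ioc).2
      (ae_of_all _ fun t ht => Real.rpow_nonneg ht.1.le _)
  rw [← ofReal_integral_eq_lintegral_ofReal hint hnn]
  congr 1
  rw [← intervalIntegral.integral_of_le zero_le_one,
    integral_rpow (Or.inl (by norm_num))]
  rw [Real.one_rpow, Real.zero_rpow (by norm_num)]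
  norm_num

private lemma step_L1 (f : SchwartzMap ℝ ℂ) (hdf : Continuous (deriv (⇑f))) (α h : ℝ) :
    ENNReal.ofReal (‖f (α + h) - f α‖ ^ 2 / h ^ 2)
      ≤ 2 * ∫⁻ t in Set.Ioc (0:ℝ) 1,
          ENNReal.ofReal (t ^ ((1:ℝ)/2)) * (‖deriv (⇑f) (α + t * h)‖₊ : ℝ≥0∞) ^ (2:ℕ) := by
  set e : ℝ → ℝ≥0∞ := fun t => (‖deriv (⇑f) (α + t * h)‖₊ : ℝ≥0∞) with he_def
  have hce : Continuous fun t : ℝ => deriv (⇑f) (α + t * h) := hdf.comp (by continuity)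
  have he : Measurable e := hce.measurable.nnnorm.coe_nnreal_ennreal
  set μ := volume.restrict (Set.Ioc (0:ℝ) 1) with hμ
  set S := ∫⁻ t, ENNReal.ofReal (t ^ ((1:ℝ)/2)) * e t ^ (2:ℕ) ∂μ with hS
  -- Step A
  have stepA : ENNReal.ofReal (‖f (α + h) - f α‖ ^ 2 / h ^ 2) ≤ (∫⁻ t, e t ∂μ) ^ (2:ℕ) := by
    rcases eq_or_ne h 0 with rfl | hh
    · simp
    · set I := ∫ t in (0:ℝ)..1, ‖deriv (⇑f) (α + t * h)‖ with hI
      have hI0 : 0 ≤ I := intervalIntegral.integral_nonneg zero_le_one fun _ _ => norm_nonneg _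
      have h2 : ‖f (α + h) - f α‖ ^ 2 / h ^ 2 ≤ I ^ 2 := by
        rw [div_le_iff₀ (by positivity)]
        have h1 := step_ftc f α h
        calc ‖f (α + h) - f α‖ ^ 2 ≤ (|h| * I) ^ 2 := by
              have h0 : (0:ℝ) ≤ |h| * I := by positivity
              nlinarith [norm_nonneg (f (α + h) - f α)]
          _ = I ^ 2 * h ^ 2 := by rw [mul_pow, _root_.sq_abs]; ring
      refine (ENNReal.ofReal_le_ofReal h2).trans ?_
      rw [ENNReal.ofReal_pow hI0]
      have hIeq : ENNReal.ofReal I = ∫⁻ t, e t ∂μ := by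
        rw [hI, intervalIntegral.integral_of_le zero_le_one,
          ofReal_integral_eq_lintegral_ofReal
            (hce.norm.integrableOn_Ioc) (ae_of_all _ fun t => norm_nonneg _)]
        simp [he_def, hμ, enorm_eq_nnnorm]
      rw [hIeq]
  refine stepA.trans ?_
  -- Step B : Hölder
  set w1 : ℝ → ℝ≥0∞ := fun t => ENNReal.ofReal (t ^ (-(1/4) : ℝ)) with hw1_def
  set w2 : ℝ → ℝ≥0∞ := fun t => ENNReal.ofReal (t ^ ((1:ℝ)/4)) * e t with hw2_def
  have hw1 : Measurable w1 := by fun_prop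
  have hw2 : Measurable w2 := by fun_prop
  have hcongr : ∫⁻ t, e t ∂μ = ∫⁻ t, (w1 * w2) t ∂μ := by
    refine lintegral_congr_ae ((ae_restrict_iff' measurableSet_Ioc).2
      (ae_of_all _ fun t ht => ?_))
    simp only [Pi.mul_apply, hw1_def, hw2_def, ← mul_assoc,
      ← ENNReal.ofReal_mul (Real.rpow_nonneg ht.1.le _), ← Real.rpow_add ht.1]
    norm_num
  have hold := ENNReal.lintegral_mul_le_Lp_mul_Lq μ
    Real.HolderConjugate.two_two hw1.aemeasurable hw2.aemeasurable
  have hw1sq : ∫⁻ t, w1 t ^ (2:ℝ) ∂μ = ENNReal.ofReal 2 := by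
    rw [← rpow_int_eq]
    refine lintegral_congr_ae ((ae_restrict_iff' measurableSet_Ioc).2
      (ae_of_all _ fun t ht => ?_))
    dsimp only [hw1_def]
    rw [ENNReal.ofReal_rpow_of_pos (Real.rpow_pos_of_pos ht.1 _),
      ← Real.rpow_mul ht.1.le]
    norm_num
  have hw2sq : ∫⁻ t, w2 t ^ (2:ℝ) ∂μ = S := by
    refine lintegral_congr_ae ((ae_restrict_iff' measurableSet_Ioc).2
      (ae_of_all _ fun t ht => ?_))
    dsimp only [hw2_def]
    rw [ENNReal.mul_rpow_of_nonneg _ _ (by norm_num : (0:ℝ) ≤ 2),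
      ENNReal.ofReal_rpow_of_pos (Real.rpow_pos_of_pos ht.1 _),
      ← Real.rpow_mul ht.1.le]
    norm_num
  rw [hcongr]
  calc (∫⁻ t, (w1 * w2) t ∂μ) ^ (2:ℕ)
      ≤ ((∫⁻ t, w1 t ^ (2:ℝ) ∂μ) ^ (1/(2:ℝ)) * (∫⁻ t, w2 t ^ (2:ℝ) ∂μ) ^ (1/(2:ℝ))) ^ (2:ℕ) := by
        gcongr
    _ = 2 * S := by
        rw [hw1sq, hw2sq, mul_pow, sqsqrt, sqsqrt, ENNReal.ofReal_ofNat]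

private lemma deriv_coe (f : SchwartzMap ℝ ℂ) : deriv (⇑f) = ⇑(SchwartzMap.derivCLM ℝ ℂ f) := by
  ext x; exact (SchwartzMap.derivCLM_apply ℝ f x).symm

private lemma D2_ne_top (f : SchwartzMap ℝ ℂ) :
    (∫⁻ y : ℝ, (‖deriv (⇑f) y‖₊ : ℝ≥0∞) ^ (2:ℕ)) ≠ ⊤ := by
  rw [deriv_coe]
  set F := SchwartzMap.derivCLM ℝ ℂ f with hF
  set C : ℝ := (SchwartzMap.seminorm ℝ 0 0) F with hC
  have hb : ∀ y, (‖F y‖₊ : ℝ≥0∞) ≤ ENNReal.ofReal C := fun y => by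
    rw [← enorm_eq_nnnorm, ← ofReal_norm]
    exact ENNReal.ofReal_le_ofReal (F.norm_le_seminorm ℝ y)
  have hle : (∫⁻ y, (‖F y‖₊ : ℝ≥0∞) ^ (2:ℕ)) ≤ ENNReal.ofReal C * ∫⁻ y, (‖F y‖₊ : ℝ≥0∞) := by
    rw [← lintegral_const_mul' _ _ ENNReal.ofReal_ne_top]
    refine lintegral_mono fun y => ?_
    rw [pow_two]
    exact mul_le_mul_left (hb y) _
  have hfin : (∫⁻ y, (‖F y‖₊ : ℝ≥0∞)) < ⊤ := F.integrable.hasFiniteIntegral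
  exact (hle.trans_lt (ENNReal.mul_lt_top ENNReal.ofReal_lt_top hfin)).ne

private lemma hardy (f : SchwartzMap ℝ ℂ) (α : ℝ) :
    (∫⁻ β : ℝ, ENNReal.ofReal (‖f α - f β‖ ^ 2 / (α - β) ^ 2))
      ≤ 4 * ∫⁻ y : ℝ, (‖deriv (⇑f) y‖₊ : ℝ≥0∞) ^ (2:ℕ) := by
  have hdf : Continuous (deriv (⇑f)) := by
    rw [deriv_coe]; exact (SchwartzMap.derivCLM ℝ ℂ f).continuous
  set D2 := ∫⁻ y : ℝ, (‖deriv (⇑f) y‖₊ : ℝ≥0∞) ^ (2:ℕ) with hD2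
  have hD2top : D2 ≠ ⊤ := D2_ne_top f
  have e1 : (∫⁻ β : ℝ, ENNReal.ofReal (‖f α - f β‖ ^ 2 / (α - β) ^ 2))
      = ∫⁻ h : ℝ, ENNReal.ofReal (‖f (α + h) - f α‖ ^ 2 / h ^ 2) := by
    rw [← lintegral_add_left_eq_self
      (fun β => ENNReal.ofReal (‖f α - f β‖ ^ 2 / (α - β) ^ 2)) α]
    refine lintegral_congr fun h => ?_
    rw [norm_sub_rev]
    congr 2
    ring
  set W : ℝ → ℝ → ℝ≥0∞ :=
    fun h t => ENNReal.ofReal (t ^ ((1:ℝ)/2)) * (‖deriv (⇑f) (α + t * h)‖₊ : ℝ≥0∞) ^ (2:ℕ)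
    with hW
  have hWmeas : AEMeasurable (Function.uncurry W)
      ((volume : Measure ℝ).prod (volume.restrict (Set.Ioc (0:ℝ) 1))) := by
    apply Measurable.aemeasurable
    refine Measurable.mul (f := fun p : ℝ × ℝ => ENNReal.ofReal (p.2 ^ ((1:ℝ)/2)))
      (g := fun p : ℝ × ℝ => (‖deriv (⇑f) (α + p.2 * p.1)‖₊ : ℝ≥0∞) ^ (2:ℕ)) ?_ ?_
    · exact (((Real.continuous_rpow_const (by norm_num : (0:ℝ) ≤ 1/2)).comp continuous_snd).measurable).ennreal_ofReal
    · exact ((((hdf.measurable.comp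
        (measurable_const.add (measurable_snd.mul measurable_fst)))).nnnorm).coe_nnreal_ennreal).pow_const 2
  have inner_eq : ∀ t ∈ Set.Ioc (0:ℝ) 1,
      (∫⁻ h : ℝ, W h t) = ENNReal.ofReal (t ^ (-(1/2) : ℝ)) * D2 := by
    intro t ht
    have hF : Measurable fun s : ℝ => (‖deriv (⇑f) (α + s)‖₊ : ℝ≥0∞) ^ (2:ℕ) :=
      (((hdf.comp (continuous_const.add continuous_id)).measurable).nnnorm).coe_nnreal_ennreal.pow_const 2
    calc (∫⁻ h : ℝ, W h t)
        = ENNReal.ofReal (t ^ ((1:ℝ)/2)) *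
            ∫⁻ h : ℝ, (fun s => (‖deriv (⇑f) (α + s)‖₊ : ℝ≥0∞) ^ (2:ℕ)) (t * h) :=
          lintegral_const_mul' _ _ ENNReal.ofReal_ne_top
      _ = ENNReal.ofReal (t ^ ((1:ℝ)/2)) * (ENNReal.ofReal |t⁻¹| *
            ∫⁻ s : ℝ, (‖deriv (⇑f) (α + s)‖₊ : ℝ≥0∞) ^ (2:ℕ)) := by
          rw [lintegral_scale _ hF ht.1.ne']
      _ = ENNReal.ofReal (t ^ (-(1/2) : ℝ)) * D2 := by
          rw [lintegral_add_left_eq_self (fun y => (‖deriv (⇑f) y‖₊ : ℝ≥0∞) ^ (2:ℕ)) α,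
            ← mul_assoc, ← ENNReal.ofReal_mul (Real.rpow_nonneg ht.1.le _)]
          congr 2
          rw [abs_of_pos (inv_pos.2 ht.1), ← Real.rpow_neg_one t,
            ← Real.rpow_add ht.1]
          norm_num
  calc (∫⁻ β : ℝ, ENNReal.ofReal (‖f α - f β‖ ^ 2 / (α - β) ^ 2))
      = ∫⁻ h : ℝ, ENNReal.ofReal (‖f (α + h) - f α‖ ^ 2 / h ^ 2) := e1
    _ ≤ ∫⁻ h : ℝ, 2 * ∫⁻ t in Set.Ioc (0:ℝ) 1, W h t :=
        lintegral_mono fun h => step_L1 f hdf α h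
    _ = 2 * ∫⁻ h : ℝ, ∫⁻ t in Set.Ioc (0:ℝ) 1, W h t :=
        lintegral_const_mul' _ _ (by norm_num)
    _ = 2 * ∫⁻ t in Set.Ioc (0:ℝ) 1, ∫⁻ h : ℝ, W h t := by
        rw [lintegral_lintegral_swap hWmeas]
    _ = 2 * ∫⁻ t in Set.Ioc (0:ℝ) 1, ENNReal.ofReal (t ^ (-(1/2) : ℝ)) * D2 := by
        congr 1
        exact lintegral_congr_ae ((ae_restrict_iff' measurableSet_Ioc).2
          (ae_of_all _ inner_eq))
    _ = 2 * ((∫⁻ t in Set.Ioc (0:ℝ) 1, ENNReal.ofReal (t ^ (-(1/2) : ℝ))) * D2) := by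
        rw [lintegral_mul_const' _ _ hD2top]
    _ = 4 * D2 := by
        rw [rpow_int_eq, ENNReal.ofReal_ofNat, ← mul_assoc]
        norm_num

private lemma ofReal_sq (x : ℂ) : ENNReal.ofReal (‖x‖ ^ 2) = (‖x‖₊ : ℝ≥0∞) ^ (2:ℕ) := by
  rw [ENNReal.ofReal_pow (norm_nonneg _), ofReal_norm, enorm_eq_nnnorm]

private lemma key_ptwise (f g : SchwartzMap ℝ ℂ) (α β : ℝ) :
    ENNReal.ofReal (‖f α * g α - f β * g β‖ ^ 2 / (α - β) ^ 2)
      ≤ 2 * (ENNReal.ofReal (‖f β‖ ^ 2) * ENNReal.ofReal (‖g α - g β‖ ^ 2 / (α - β) ^ 2))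
        + 2 * (ENNReal.ofReal (‖g α‖ ^ 2) * ENNReal.ofReal (‖f α - f β‖ ^ 2 / (α - β) ^ 2)) := by
  have hr : ‖f α * g α - f β * g β‖ ^ 2 / (α - β) ^ 2
      ≤ 2 * (‖f β‖ ^ 2 * (‖g α - g β‖ ^ 2 / (α - β) ^ 2))
        + 2 * (‖g α‖ ^ 2 * (‖f α - f β‖ ^ 2 / (α - β) ^ 2)) := by
    rcases eq_or_ne α β with rfl | hab
    · simp only [sub_self, ne_eq, OfNat.ofNat_ne_zero, not_false_eq_true, zero_pow, div_zero,
        mul_zero, add_zero, le_refl, zero_add]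
    · have hc : (0:ℝ) < (α - β) ^ 2 := by
        have := sub_ne_zero.2 hab
        positivity
      have heq : f α * g α - f β * g β = f β * (g α - g β) + g α * (f α - f β) := by ring
      have hn : ‖f α * g α - f β * g β‖ ≤ ‖f β‖ * ‖g α - g β‖ + ‖g α‖ * ‖f α - f β‖ := by
        rw [heq]
        exact (norm_add_le _ _).trans (by rw [norm_mul, norm_mul])
      have expand : 2 * (‖f β‖ ^ 2 * (‖g α - g β‖ ^ 2 / (α - β) ^ 2))
            + 2 * (‖g α‖ ^ 2 * (‖f α - f β‖ ^ 2 / (α - β) ^ 2))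
          = (2 * (‖f β‖ * ‖g α - g β‖) ^ 2 + 2 * (‖g α‖ * ‖f α - f β‖) ^ 2) / (α - β) ^ 2 := by
        ring
      rw [expand]
      gcongr
      nlinarith [hn, norm_nonneg (f α * g α - f β * g β),
        sq_nonneg (‖f β‖ * ‖g α - g β‖ - ‖g α‖ * ‖f α - f β‖),
        mul_nonneg (norm_nonneg (f β : ℂ)) (norm_nonneg (g α - g β)),
        mul_nonneg (norm_nonneg (g α : ℂ)) (norm_nonneg (f α - f β))]
  refine (ENNReal.ofReal_le_ofReal hr).trans_eq ?_
  rw [ENNReal.ofReal_add (by positivity) (by positivity),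
    ENNReal.ofReal_mul (by norm_num : (0:ℝ) ≤ 2), ENNReal.ofReal_mul (sq_nonneg _),
    ENNReal.ofReal_mul (by norm_num : (0:ℝ) ≤ 2), ENNReal.ofReal_mul (sq_nonneg _),
    ENNReal.ofReal_ofNat]

/-- there is a universal `C > 0` so that for Schwartz `f, g`,
`‖fg‖_{Ḣ^{1/2}} ≤ C(‖f'‖_{L²}‖g‖_{L²} + ‖f‖_{L^∞}‖g‖_{Ḣ^{1/2}})`. -/
theorem statement8 : ∃ C : ℝ, 0 < C ∧ ∀ f g : SchwartzMap ℝ ℂ,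
    Hhalf (fun α : ℝ => f α * g α)
      ≤ ENNReal.ofReal C *
        (eLpNorm (deriv (⇑f)) 2 volume * eLpNorm (⇑g) 2 volume
          + eLpNorm (⇑f) ⊤ volume * Hhalf (⇑g)) := by
  refine ⟨4, by norm_num, fun f g => ?_⟩
  set c := ENNReal.ofReal (1 / (2 * Real.pi)) with hc
  set Df := eLpNorm (deriv (⇑f)) 2 volume with hDf
  set G := eLpNorm (⇑g) 2 volume with hG
  set Einf := eLpNorm (⇑f) ⊤ volume with hE
  set Hg := Hhalf (⇑g) with hHg
  have hEtop : Einf ≠ ⊤ := by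
    rw [hE, eLpNorm_exponent_top]
    exact (eLpNormEssSup_lt_top_of_ae_bound (C := (SchwartzMap.seminorm ℝ 0 0) f)
      (Filter.Eventually.of_forall fun x => f.norm_le_seminorm ℝ x)).ne
  set D2 := ∫⁻ y : ℝ, (‖deriv (⇑f) y‖₊ : ℝ≥0∞) ^ (2:ℕ) with hD2d
  have hD2top : D2 ≠ ⊤ := D2_ne_top f
  set G2 := ∫⁻ x : ℝ, (‖g x‖₊ : ℝ≥0∞) ^ (2:ℕ) with hG2d
  set Jg : ℝ → ℝ≥0∞ :=
    fun α => ∫⁻ β : ℝ, ENNReal.ofReal (‖g α - g β‖ ^ 2 / (α - β) ^ 2) with hJg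
  have hEb : ∀ᵐ β : ℝ ∂volume, (‖f β‖₊ : ℝ≥0∞) ≤ Einf := by
    rw [hE, eLpNorm_exponent_top]
    exact_mod_cast ae_le_eLpNormEssSup
  -- inner bound
  have inner : ∀ α : ℝ,
      (∫⁻ β : ℝ, ENNReal.ofReal (‖f α * g α - f β * g β‖ ^ 2 / (α - β) ^ 2))
        ≤ 2 * Einf ^ (2:ℕ) * Jg α + 8 * D2 * ENNReal.ofReal (‖g α‖ ^ 2) := by
    intro α
    have mdiv : Measurable fun β : ℝ => ‖g α - g β‖ ^ 2 / (α - β) ^ 2 :=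
      (((continuous_const.sub g.continuous).norm.pow 2).measurable).div
        (((continuous_const.sub continuous_id).pow 2).measurable)
    have mT1 : Measurable fun β : ℝ =>
        2 * (ENNReal.ofReal (‖f β‖ ^ 2) * ENNReal.ofReal (‖g α - g β‖ ^ 2 / (α - β) ^ 2)) :=
      measurable_const.mul
        ((((f.continuous.norm.pow 2).measurable).ennreal_ofReal).mul mdiv.ennreal_ofReal)
    have step1 : (∫⁻ β : ℝ,
          2 * (ENNReal.ofReal (‖f β‖ ^ 2) * ENNReal.ofReal (‖g α - g β‖ ^ 2 / (α - β) ^ 2)))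
        ≤ 2 * Einf ^ (2:ℕ) * Jg α := by
      rw [lintegral_const_mul' _ _ (by norm_num : (2:ℝ≥0∞) ≠ ⊤)]
      have hmono : (∫⁻ β : ℝ,
            ENNReal.ofReal (‖f β‖ ^ 2) * ENNReal.ofReal (‖g α - g β‖ ^ 2 / (α - β) ^ 2))
          ≤ ∫⁻ β : ℝ, Einf ^ (2:ℕ) * ENNReal.ofReal (‖g α - g β‖ ^ 2 / (α - β) ^ 2) :=
        lintegral_mono_ae (hEb.mono fun β hβ => by
          rw [ofReal_sq]
          exact mul_le_mul_left (pow_le_pow_left' hβ 2) _)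
      calc 2 * (∫⁻ β : ℝ,
            ENNReal.ofReal (‖f β‖ ^ 2) * ENNReal.ofReal (‖g α - g β‖ ^ 2 / (α - β) ^ 2))
          ≤ 2 * ∫⁻ β : ℝ, Einf ^ (2:ℕ) * ENNReal.ofReal (‖g α - g β‖ ^ 2 / (α - β) ^ 2) :=
            mul_le_mul_right hmono 2
        _ = 2 * Einf ^ (2:ℕ) * Jg α := by
            rw [lintegral_const_mul' _ _ (ENNReal.pow_ne_top hEtop), hJg, mul_assoc]
    have step2 : (∫⁻ β : ℝ,
          2 * (ENNReal.ofReal (‖g α‖ ^ 2) * ENNReal.ofReal (‖f α - f β‖ ^ 2 / (α - β) ^ 2)))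
        ≤ 8 * D2 * ENNReal.ofReal (‖g α‖ ^ 2) := by
      rw [lintegral_const_mul' _ _ (by norm_num : (2:ℝ≥0∞) ≠ ⊤),
        lintegral_const_mul' _ _ ENNReal.ofReal_ne_top]
      calc 2 * (ENNReal.ofReal (‖g α‖ ^ 2) *
            ∫⁻ β : ℝ, ENNReal.ofReal (‖f α - f β‖ ^ 2 / (α - β) ^ 2))
          ≤ 2 * (ENNReal.ofReal (‖g α‖ ^ 2) * (4 * D2)) := by
            gcongr
            exact hardy f α
        _ = 8 * D2 * ENNReal.ofReal (‖g α‖ ^ 2) := by ring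
    calc (∫⁻ β : ℝ, ENNReal.ofReal (‖f α * g α - f β * g β‖ ^ 2 / (α - β) ^ 2))
        ≤ ∫⁻ β : ℝ,
            (2 * (ENNReal.ofReal (‖f β‖ ^ 2) * ENNReal.ofReal (‖g α - g β‖ ^ 2 / (α - β) ^ 2))
            + 2 * (ENNReal.ofReal (‖g α‖ ^ 2) * ENNReal.ofReal (‖f α - f β‖ ^ 2 / (α - β) ^ 2))) :=
          lintegral_mono fun β => key_ptwise f g α β
      _ = (∫⁻ β : ℝ,
            2 * (ENNReal.ofReal (‖f β‖ ^ 2) * ENNReal.ofReal (‖g α - g β‖ ^ 2 / (α - β) ^ 2)))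
          + ∫⁻ β : ℝ,
            2 * (ENNReal.ofReal (‖g α‖ ^ 2) * ENNReal.ofReal (‖f α - f β‖ ^ 2 / (α - β) ^ 2)) :=
          lintegral_add_left mT1 _
      _ ≤ 2 * Einf ^ (2:ℕ) * Jg α + 8 * D2 * ENNReal.ofReal (‖g α‖ ^ 2) :=
          add_le_add step1 step2
  -- outer bound
  have outer :
      (∫⁻ α : ℝ, ∫⁻ β : ℝ, ENNReal.ofReal (‖f α * g α - f β * g β‖ ^ 2 / (α - β) ^ 2))
        ≤ 2 * Einf ^ (2:ℕ) * (∫⁻ α, Jg α) + 8 * D2 * G2 := by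
    have m2 : Measurable fun α : ℝ => 8 * D2 * ENNReal.ofReal (‖g α‖ ^ 2) :=
      measurable_const.mul ((g.continuous.norm.pow 2).measurable).ennreal_ofReal
    calc (∫⁻ α : ℝ, ∫⁻ β : ℝ, ENNReal.ofReal (‖f α * g α - f β * g β‖ ^ 2 / (α - β) ^ 2))
        ≤ ∫⁻ α : ℝ, (2 * Einf ^ (2:ℕ) * Jg α + 8 * D2 * ENNReal.ofReal (‖g α‖ ^ 2)) :=
          lintegral_mono inner
      _ = (∫⁻ α : ℝ, 2 * Einf ^ (2:ℕ) * Jg α)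
          + ∫⁻ α : ℝ, 8 * D2 * ENNReal.ofReal (‖g α‖ ^ 2) := lintegral_add_right _ m2
      _ = 2 * Einf ^ (2:ℕ) * (∫⁻ α, Jg α) + 8 * D2 * G2 := by
          rw [lintegral_const_mul' _ _
              (ENNReal.mul_ne_top (by norm_num) (ENNReal.pow_ne_top hEtop)),
            lintegral_const_mul' _ _ (ENNReal.mul_ne_top (by norm_num) hD2top)]
          congr 1
          rw [hG2d]
          exact congrArg _ (lintegral_congr fun x => ofReal_sq (g x))
  -- final
  have hcle : c ≤ 1 := by
    rw [hc]
    refine ENNReal.ofReal_le_one.2 ?_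
    rw [div_le_one (by positivity)]
    nlinarith [Real.pi_gt_three]
  have hHgsq : Hg ^ (2:ℕ) = c * ∫⁻ α, Jg α := by
    rw [hHg, Hhalf, sqsqrt]
  have hDfsq : Df ^ (2:ℕ) = D2 := L2sq _
  have hGsq : G ^ (2:ℕ) = G2 := L2sq _
  have main : c * (∫⁻ α : ℝ, ∫⁻ β : ℝ,
        ENNReal.ofReal (‖f α * g α - f β * g β‖ ^ 2 / (α - β) ^ 2))
      ≤ 16 * (Df * G + Einf * Hg) ^ (2:ℕ) := by
    calc c * (∫⁻ α : ℝ, ∫⁻ β : ℝ,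
          ENNReal.ofReal (‖f α * g α - f β * g β‖ ^ 2 / (α - β) ^ 2))
        ≤ c * (2 * Einf ^ (2:ℕ) * (∫⁻ α, Jg α) + 8 * D2 * G2) := by gcongr
      _ = 2 * Einf ^ (2:ℕ) * (c * ∫⁻ α, Jg α) + c * (8 * D2 * G2) := by ring
      _ ≤ 2 * Einf ^ (2:ℕ) * Hg ^ (2:ℕ) + 1 * (8 * D2 * G2) := by
          rw [hHgsq]; gcongr
      _ = 2 * (Einf * Hg) ^ (2:ℕ) + 8 * (Df * G) ^ (2:ℕ) := by
          rw [one_mul, mul_pow, mul_pow, hDfsq, hGsq]; ring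
      _ ≤ 2 * (Df * G + Einf * Hg) ^ (2:ℕ) + 8 * (Df * G + Einf * Hg) ^ (2:ℕ) := by
          gcongr
          · exact le_add_self
          · exact le_add_right le_rfl
      _ ≤ 16 * (Df * G + Einf * Hg) ^ (2:ℕ) := by
          rw [← add_mul]
          exact mul_le_mul_left (by norm_num) _
  have final : Hhalf (fun α : ℝ => f α * g α)
      ≤ (16:ℝ≥0∞) ^ ((1:ℝ)/2) * (Df * G + Einf * Hg) := by
    rw [Hhalf]
    calc (c * (∫⁻ α : ℝ, ∫⁻ β : ℝ,
          ENNReal.ofReal (‖f α * g α - f β * g β‖ ^ 2 / (α - β) ^ 2))) ^ ((1:ℝ)/2)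
        ≤ (16 * (Df * G + Einf * Hg) ^ (2:ℕ)) ^ ((1:ℝ)/2) :=
          ENNReal.rpow_le_rpow main (by norm_num)
      _ = (16:ℝ≥0∞) ^ ((1:ℝ)/2) * (Df * G + Einf * Hg) := by
          rw [ENNReal.mul_rpow_of_nonneg _ _ (by norm_num : (0:ℝ) ≤ 1/2)]
          congr 1
          rw [← ENNReal.rpow_natCast (Df * G + Einf * Hg) 2, ← ENNReal.rpow_mul]
          norm_num
  refine final.trans ?_
  gcongr
  rw [ENNReal.ofReal_ofNat]
  rw [show (16:ℝ≥0∞) = (4:ℝ≥0∞) ^ (2:ℕ) by norm_num,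
    ← ENNReal.rpow_natCast _ 2, ← ENNReal.rpow_mul]
  norm_num
end

section
/- There exists a universal constant C > 0 with the following property: for all complex-valued Schwartz functions f, g ∈ 𝒮(ℝ) and every bounded continuously differentiable REAL-valued function w : ℝ → ℝ with w' ∈ L²(ℝ), one has ‖f·g·w‖_{L²(ℝ)} ≤ C·( ‖f·w‖_{Ḣ^{1/2}}·‖g‖_{L²(ℝ)} + ‖g·w‖_{Ḣ^{1/2}}·‖f‖_{L²(ℝ)} + ‖f‖_{L²(ℝ)}·‖g‖_{L²(ℝ)}·‖w'‖_{L²(ℝ)} ), the inequality being interpreted in [0,∞]. -/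
open MeasureTheory Complex
open scoped ENNReal NNReal

lemma optL {x a b r : ℝ≥0∞} (hb : b ≠ ∞) (hab : a = ∞ → b ≠ 0)
    (h : ∀ t : ℝ, 0 < t → x ≤ a * ENNReal.ofReal t + b * ENNReal.ofReal t⁻¹ + r) :
    x ≤ 2 * (a * b) ^ (1/2:ℝ) + r := by
  rcases eq_or_ne a ∞ with ha | ha
  · have hb0 : b ≠ 0 := hab ha
    have h2 : (a*b) ^ (1/2:ℝ) = ∞ := by
      rw [ha, ENNReal.top_mul hb0, ENNReal.top_rpow_of_pos (by norm_num)]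
    rw [h2]
    simp
  rcases eq_or_ne a 0 with ha0 | ha0
  · refine le_trans ?_ (le_add_left le_rfl)
    by_cases hr : r = ∞
    · simp [hr]
    refine ENNReal.le_of_forall_pos_le_add fun ε hε hlt => ?_
    have hbe : 0 < (b.toReal + 1) / ε := by positivity
    have hh := h ((b.toReal + 1) / ε) hbe
    rw [ha0] at hh
    simp only [zero_mul, zero_add] at hh
    refine hh.trans ?_
    rw [add_comm]
    gcongr
    rw [inv_div]
    calc b * ENNReal.ofReal (ε / (b.toReal + 1))
        ≤ ENNReal.ofReal (b.toReal) * ENNReal.ofReal (ε / (b.toReal + 1)) := by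
          gcongr; exact le_of_eq (ENNReal.ofReal_toReal hb).symm
      _ = ENNReal.ofReal (b.toReal * (ε / (b.toReal + 1))) := by
          rw [ENNReal.ofReal_mul ENNReal.toReal_nonneg]
      _ ≤ ENNReal.ofReal ε := by
          apply ENNReal.ofReal_le_ofReal
          rw [mul_div_assoc', div_le_iff₀ (by positivity)]
          nlinarith [ENNReal.toReal_nonneg (a := b), ε.coe_nonneg]
      _ = (ε : ℝ≥0∞) := ENNReal.ofReal_coe_nnreal
  rcases eq_or_ne b 0 with hb0 | hb0
  · refine le_trans ?_ (le_add_left le_rfl)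
    by_cases hr : r = ∞
    · simp [hr]
    refine ENNReal.le_of_forall_pos_le_add fun ε hε hlt => ?_
    have hae : 0 < (ε : ℝ) / (a.toReal + 1) := by positivity
    have hh := h _ hae
    rw [hb0] at hh
    simp only [zero_mul, add_zero] at hh
    refine hh.trans ?_
    rw [add_comm]
    gcongr
    calc a * ENNReal.ofReal (↑ε / (a.toReal + 1))
        ≤ ENNReal.ofReal (a.toReal) * ENNReal.ofReal (↑ε / (a.toReal + 1)) := by
          gcongr; exact le_of_eq (ENNReal.ofReal_toReal ha).symm
      _ = ENNReal.ofReal (a.toReal * (↑ε / (a.toReal + 1))) := by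
          rw [ENNReal.ofReal_mul ENNReal.toReal_nonneg]
      _ ≤ ENNReal.ofReal ε := by
          apply ENNReal.ofReal_le_ofReal
          rw [mul_div_assoc', div_le_iff₀ (by positivity)]
          nlinarith [ENNReal.toReal_nonneg (a := a), ε.coe_nonneg]
      _ = (ε : ℝ≥0∞) := ENNReal.ofReal_coe_nnreal
  · set A := a.toReal with hA
    set B := b.toReal with hB
    have hA0 : 0 < A := ENNReal.toReal_pos ha0 ha
    have hB0 : 0 < B := ENNReal.toReal_pos hb0 hb
    have ht : 0 < Real.sqrt (B / A) := Real.sqrt_pos.2 (by positivity)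
    have hh := h _ ht
    have ea : a = ENNReal.ofReal A := (ENNReal.ofReal_toReal ha).symm
    have eb : b = ENNReal.ofReal B := (ENNReal.ofReal_toReal hb).symm
    have key : a * ENNReal.ofReal (Real.sqrt (B/A)) + b * ENNReal.ofReal (Real.sqrt (B/A))⁻¹
        = 2 * (a*b) ^ (1/2:ℝ) := by
      rw [ea, eb, ← ENNReal.ofReal_mul hA0.le, ← ENNReal.ofReal_mul hB0.le]
      have e1 : A * Real.sqrt (B/A) = Real.sqrt (A*B) := by
        rw [show A * B = A^2 * (B/A) by field_simp, Real.sqrt_mul (by positivity),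
          Real.sqrt_sq hA0.le]
      have e2 : B * (Real.sqrt (B/A))⁻¹ = Real.sqrt (A*B) := by
        rw [← Real.sqrt_inv, show (B/A)⁻¹ = A / B by field_simp]
        rw [show A * B = B^2 * (A/B) by field_simp, Real.sqrt_mul (by positivity),
          Real.sqrt_sq hB0.le]
      rw [e1, e2, ← two_mul]
      congr 1
      rw [← ENNReal.ofReal_mul hA0.le, Real.sqrt_eq_rpow,
        ENNReal.ofReal_rpow_of_pos (by positivity)]
    exact hh.trans (by rw [key])

lemma quad {X K c : ℝ≥0∞} (hX : X ≠ ∞) (h : X ^ (2:ℝ) ≤ K * X + c) :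
    X ≤ K + c ^ (1/2:ℝ) := by
  by_contra hc
  push_neg at hc
  have hc2 : c ^ (1/2:ℝ) < X := lt_of_le_of_lt (le_add_left le_rfl) hc
  have hX0 : X ≠ 0 := by
    intro h0; rw [h0] at hc; exact absurd hc (by simp)
  have hcc : c ≤ c^(1/2:ℝ) * c^(1/2:ℝ) := by
    rw [← ENNReal.rpow_add_of_nonneg _ _ (by norm_num) (by norm_num),
      show (1:ℝ)/2 + 1/2 = 1 by norm_num, ENNReal.rpow_one]
  have hKX : K * X + c < X * X := by
    calc K * X + c ≤ K * X + c^(1/2:ℝ) * c^(1/2:ℝ) := by gcongr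
      _ ≤ K * X + c^(1/2:ℝ) * X := by gcongr
      _ = (K + c^(1/2:ℝ)) * X := by ring
      _ < X * X := ENNReal.mul_lt_mul_left hX0 hX hc
  have e : X ^ (2:ℝ) = X * X := by
    rw [show (2:ℝ) = ((2:ℕ):ℝ) by norm_num, ENNReal.rpow_natCast]; ring
  rw [e] at h
  exact absurd (lt_of_le_of_lt h hKX) (lt_irrefl _)

noncomputable def S2 {E : Type*} [NormedAddCommGroup E] (u : ℝ → E) : ℝ≥0∞ :=
  eLpNorm u 2 volume

lemma S2_eq {E : Type*} [NormedAddCommGroup E] (u : ℝ → E) :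
    S2 u = (∫⁻ a, (‖u a‖₊ : ℝ≥0∞) ^ (2:ℝ)) ^ (1/2:ℝ) := by
  rw [S2, eLpNorm_eq_lintegral_rpow_enorm_toReal (by norm_num) (by norm_num)]
  simp only [enorm_eq_nnnorm]
  norm_num

lemma half_sq (x : ℝ≥0∞) : (x ^ (1/2:ℝ)) ^ (2:ℝ) = x := by
  rw [← ENNReal.rpow_mul]
  norm_num

lemma sq_half (x : ℝ≥0∞) : (x ^ (2:ℝ)) ^ (1/2:ℝ) = x := by
  rw [← ENNReal.rpow_mul]
  norm_num

-- restricted L2 lintegral bounded by S2 squared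
lemma restrict_le_S2 {E : Type*} [NormedAddCommGroup E] (u : ℝ → E) (s : Set ℝ) :
    (∫⁻ a in s, (‖u a‖₊ : ℝ≥0∞) ^ (2:ℝ)) ^ (1/2:ℝ) ≤ S2 u := by
  rw [S2_eq]
  exact ENNReal.rpow_le_rpow (setLIntegral_le_lintegral s _) (by norm_num)

lemma lintCS {μ : Measure ℝ} {f g : ℝ → ℝ≥0∞} (hf : AEMeasurable f μ) (hg : AEMeasurable g μ) :
    ∫⁻ a, f a * g a ∂μ ≤ (∫⁻ a, f a ^ (2:ℝ) ∂μ) ^ (1/2:ℝ) * (∫⁻ a, g a ^ (2:ℝ) ∂μ) ^ (1/2:ℝ) := by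
  have h := ENNReal.lintegral_mul_le_Lp_mul_Lq μ (p := 2) (q := 2) (by constructor <;> norm_num) hf hg
  simpa using h

-- FTC + Cauchy-Schwarz bound for w increments
lemma sqw {w : ℝ → ℝ} (hw : ContDiff ℝ 1 w) (α β : ℝ) :
    ENNReal.ofReal |w α - w β| ≤
      S2 (deriv w) * (ENNReal.ofReal |α - β|) ^ (1/2:ℝ) := by
  have hd : Continuous (deriv w) := hw.continuous_deriv le_rfl
  -- main inequality for ordered pair
  have main : ∀ a b : ℝ, a ≤ b → ENNReal.ofReal |w b - w a| ≤
      S2 (deriv w) * (ENNReal.ofReal |b - a|) ^ (1/2:ℝ) := by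
    intro a b hab
    have hftc : ∫ y in a..b, deriv w y = w b - w a :=
      intervalIntegral.integral_deriv_eq_sub
        (fun x _ => (hw.differentiable one_ne_zero).differentiableAt)
        (hd.intervalIntegrable a b)
    have h1 : ENNReal.ofReal |w b - w a| = (‖∫ y in Set.Ioc a b, deriv w y‖₊ : ℝ≥0∞) := by
      rw [← intervalIntegral.integral_of_le hab, hftc]
      rw [← enorm_eq_nnnorm, ← ofReal_norm, Real.norm_eq_abs]
    rw [h1]
    calc (‖∫ y in Set.Ioc a b, deriv w y‖₊ : ℝ≥0∞)
        ≤ ∫⁻ y in Set.Ioc a b, (‖deriv w y‖₊ : ℝ≥0∞) :=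
          enorm_integral_le_lintegral_enorm _
      _ = ∫⁻ y in Set.Ioc a b, (‖deriv w y‖₊ : ℝ≥0∞) * 1 := by simp
      _ ≤ (∫⁻ y in Set.Ioc a b, (‖deriv w y‖₊ : ℝ≥0∞) ^ (2:ℝ)) ^ (1/2:ℝ) *
          (∫⁻ y in Set.Ioc a b, (1:ℝ≥0∞) ^ (2:ℝ)) ^ (1/2:ℝ) :=
          lintCS (hd.measurable.nnnorm.coe_nnreal_ennreal.aemeasurable) aemeasurable_const
      _ ≤ S2 (deriv w) * (ENNReal.ofReal |b - a|) ^ (1/2:ℝ) := by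
          gcongr
          · exact restrict_le_S2 _ _
          · rw [lintegral_const, Measure.restrict_apply MeasurableSet.univ, Set.univ_inter,
              Real.volume_Ioc, _root_.abs_of_nonneg (sub_nonneg.2 hab)]
            simp
  rcases le_total β α with h | h
  · simpa [abs_sub_comm] using main β α h
  · rw [abs_sub_comm (w α), abs_sub_comm α]
    exact main α β h

noncomputable def Dq (u : ℝ → ℂ) (α : ℝ) : ℝ≥0∞ :=
  ∫⁻ β, ENNReal.ofReal (‖u α - u β‖ ^ 2 / (α - β) ^ 2)

lemma rpow_two_mul (x : ℝ≥0∞) : x ^ (2:ℝ) = x * x := by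
  rw [show (2:ℝ) = ((2:ℕ):ℝ) by norm_num, ENNReal.rpow_natCast]; ring

lemma four_sq_half (a b : ℝ≥0∞) : (4 * (a^(2:ℝ) * b^(2:ℝ)))^(1/2:ℝ) = 2*(a*b) := by
  rw [ENNReal.mul_rpow_of_nonneg _ _ (by norm_num : (0:ℝ) ≤ 1/2),
    ENNReal.mul_rpow_of_nonneg _ _ (by norm_num : (0:ℝ) ≤ 1/2), sq_half, sq_half,
    show (4:ℝ≥0∞)^(1/2:ℝ) = 2 by
      rw [show (4:ℝ≥0∞) = 2^(2:ℝ) by rw [rpow_two_mul]; norm_num, sq_half]]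

lemma pointwiseL (f g : ℝ → ℂ) (w : ℝ → ℝ) (hf : Continuous f) (hw : ContDiff ℝ 1 w)
    (hsqw : ∀ a b : ℝ, ENNReal.ofReal |w a - w b| ≤
      S2 (deriv w) * (ENNReal.ofReal |a - b|) ^ (1/2:ℝ))
    (α L : ℝ) (hL : 0 < L) :
    ENNReal.ofReal (2*L) * (‖f α * g α * (w α : ℂ)‖₊ : ℝ≥0∞) ≤
      (‖g α‖₊ : ℝ≥0∞) * (Dq (fun x => f x * (w x : ℂ)) α) ^ (1/2:ℝ) *
        (ENNReal.ofReal (2*L^3)) ^ (1/2:ℝ)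
      + (‖g α * (w α : ℂ)‖₊ : ℝ≥0∞) * S2 f * (ENNReal.ofReal (2*L)) ^ (1/2:ℝ)
      + (‖g α‖₊ : ℝ≥0∞) * (S2 f * S2 (deriv w) * (ENNReal.ofReal (2*L^2)) ^ (1/2:ℝ)) := by
  have hwc : Continuous w := hw.continuous
  set F : ℝ → ℂ := fun x => f x * (w x : ℂ) with hF
  have hFc : Continuous F := hf.mul (continuous_ofReal.comp hwc)
  set I : Set ℝ := Set.Ioc (α - L) (α + L) with hI
  have hvol : volume I = ENNReal.ofReal (2*L) := by
    rw [hI, Real.volume_Ioc]; congr 1; ring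
  have hfI : IntegrableOn f I volume := hf.integrableOn_Ioc
  have hFI : IntegrableOn F I volume := hFc.integrableOn_Ioc
  -- the identity
  have key : (∫ β in I, (F α - F β)) * g α + (∫ β in I, f β) * (g α * (w α:ℂ))
      - (∫ β in I, f β * ((w α:ℂ) - (w β:ℂ))) * g α = ((2*L : ℝ) : ℂ) * (F α * g α) := by
    have e1 : ∫ β in I, (F α - F β) = ((2*L : ℝ) : ℂ) * F α - ∫ β in I, F β := by
      rw [integral_sub (integrableOn_const (C := F α) (by rw [hvol]; exact ENNReal.ofReal_ne_top) enorm_ne_top) hFI,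
        setIntegral_const, measureReal_def, hvol, ENNReal.toReal_ofReal (by positivity), Complex.real_smul]
    have e2 : ∫ β in I, f β * ((w α:ℂ) - (w β:ℂ))
        = (w α:ℂ) * (∫ β in I, f β) - ∫ β in I, F β := by
      have e : ∀ β, f β * ((w α:ℂ) - (w β:ℂ)) = (w α:ℂ) * f β - F β := by
        intro β; rw [hF]; ring
      simp_rw [e]
      rw [integral_sub (hfI.const_mul _) hFI, integral_const_mul]
    rw [e1, e2]
    ring
  -- pass to enorms
  have hnorm : (‖((2*L:ℝ):ℂ) * (F α * g α)‖₊ : ℝ≥0∞)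
      = ENNReal.ofReal (2*L) * (‖f α * g α * (w α:ℂ)‖₊ : ℝ≥0∞) := by
    rw [show ((2*L:ℝ):ℂ) * (F α * g α) = ((2*L:ℝ):ℂ) * (f α * g α * (w α:ℂ)) by
      rw [hF]; ring]
    rw [nnnorm_mul, ENNReal.coe_mul]
    congr 1
    rw [← enorm_eq_nnnorm, ← ofReal_norm, Complex.norm_real, Real.norm_eq_abs,
      _root_.abs_of_pos (by positivity)]
  rw [← hnorm, ← key]
  have tri : (‖(∫ β in I, (F α - F β)) * g α + (∫ β in I, f β) * (g α * (w α:ℂ))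
      - (∫ β in I, f β * ((w α:ℂ) - (w β:ℂ))) * g α‖₊ : ℝ≥0∞)
      ≤ (‖(∫ β in I, (F α - F β)) * g α‖₊ : ℝ≥0∞)
        + (‖(∫ β in I, f β) * (g α * (w α:ℂ))‖₊ : ℝ≥0∞)
        + (‖(∫ β in I, f β * ((w α:ℂ) - (w β:ℂ))) * g α‖₊ : ℝ≥0∞) := by
    refine le_trans (ENNReal.coe_le_coe.2 (nnnorm_sub_le _ _)) ?_
    rw [ENNReal.coe_add]
    gcongr
    exact le_trans (ENNReal.coe_le_coe.2 (nnnorm_add_le _ _)) (by rw [ENNReal.coe_add])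
  refine tri.trans ?_
  gcongr ?_ + ?_ + ?_
  · -- B1
    rw [nnnorm_mul, ENNReal.coe_mul, mul_comm]
    rw [mul_assoc]
    gcongr
    calc (‖∫ β in I, (F α - F β)‖₊ : ℝ≥0∞)
        ≤ ∫⁻ β in I, (‖F α - F β‖₊ : ℝ≥0∞) := enorm_integral_le_lintegral_enorm _
      _ ≤ (Dq F α) ^ (1/2:ℝ) * (ENNReal.ofReal (2*L^3)) ^ (1/2:ℝ) := ?_
    have h0 : (volume.restrict I) {α} = 0 := by
      apply le_antisymm _ zero_le
      calc (volume.restrict I) {α} ≤ volume {α} := Measure.restrict_apply_le _ _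
        _ = 0 := Real.volume_singleton
    have hne : ∀ᵐ β ∂(volume.restrict I), β ≠ α := by
      rw [ae_iff]
      exact measure_mono_null (fun x hx => by simpa using hx) h0
    have hae : ∀ᵐ β ∂(volume.restrict I), (‖F α - F β‖₊ : ℝ≥0∞)
        = (ENNReal.ofReal (‖F α - F β‖^2/(α-β)^2)) ^ (1/2:ℝ)
          * (ENNReal.ofReal ((α-β)^2)) ^ (1/2:ℝ) := by
      filter_upwards [hne] with β hβ
      rw [ENNReal.ofReal_rpow_of_nonneg (by positivity) (by norm_num),
        ENNReal.ofReal_rpow_of_nonneg (by positivity) (by norm_num),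
        ← ENNReal.ofReal_mul (by positivity), ← enorm_eq_nnnorm, ← ofReal_norm]
      congr 1
      rw [← Real.sqrt_eq_rpow, ← Real.sqrt_eq_rpow, Real.sqrt_div (by positivity) _,
        Real.sqrt_sq (norm_nonneg _), Real.sqrt_sq_eq_abs]
      rw [div_mul_cancel₀]
      exact abs_ne_zero.2 (sub_ne_zero.2 (fun h => hβ (by linarith)))
    rw [lintegral_congr_ae hae]
    have m1 : Measurable fun β => ENNReal.ofReal (‖F α - F β‖^2/(α-β)^2) := by
      apply Measurable.ennreal_ofReal
      exact (((continuous_const.sub hFc).norm.pow 2).measurable).div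
        (((continuous_const.sub continuous_id).pow 2).measurable)
    have m2 : Measurable fun β : ℝ => ENNReal.ofReal ((α-β)^2) := by
      apply Measurable.ennreal_ofReal
      exact ((continuous_const.sub continuous_id).pow 2).measurable
    calc ∫⁻ β in I, (ENNReal.ofReal (‖F α - F β‖^2/(α-β)^2)) ^ (1/2:ℝ)
          * (ENNReal.ofReal ((α-β)^2)) ^ (1/2:ℝ)
        ≤ (∫⁻ β in I, ((ENNReal.ofReal (‖F α - F β‖^2/(α-β)^2)) ^ (1/2:ℝ)) ^ (2:ℝ)) ^ (1/2:ℝ)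
          * (∫⁻ β in I, ((ENNReal.ofReal ((α-β)^2)) ^ (1/2:ℝ)) ^ (2:ℝ)) ^ (1/2:ℝ) :=
          lintCS ((m1.pow_const _).aemeasurable) ((m2.pow_const _).aemeasurable)
      _ ≤ (Dq F α) ^ (1/2:ℝ) * (ENNReal.ofReal (2*L^3)) ^ (1/2:ℝ) := by
          simp_rw [half_sq]
          gcongr
          · exact setLIntegral_le_lintegral _ _
          · calc ∫⁻ β in I, ENNReal.ofReal ((α-β)^2)
                ≤ ∫⁻ _ in I, ENNReal.ofReal (L^2) := by
                  refine setLIntegral_mono measurable_const (fun β hβ => ?_)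
                  apply ENNReal.ofReal_le_ofReal
                  rw [hI] at hβ
                  have h1 : |α - β| ≤ L := by
                    rw [abs_le]; constructor <;> [linarith [hβ.2]; linarith [hβ.1]]
                  calc (α-β)^2 = |α-β|^2 := (_root_.sq_abs _).symm
                    _ ≤ L^2 := by nlinarith [abs_nonneg (α - β)]
              _ = ENNReal.ofReal (L^2) * volume I := by
                  rw [setLIntegral_const]
              _ ≤ ENNReal.ofReal (2*L^3) := by
                  rw [hvol, ← ENNReal.ofReal_mul (by positivity)]
                  apply ENNReal.ofReal_le_ofReal; nlinarith [hL.le]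
  · -- B2
    rw [nnnorm_mul, ENNReal.coe_mul, mul_comm]
    rw [mul_assoc]
    gcongr
    calc (‖∫ β in I, f β‖₊ : ℝ≥0∞)
        ≤ ∫⁻ β in I, (‖f β‖₊ : ℝ≥0∞) := enorm_integral_le_lintegral_enorm _
      _ = ∫⁻ β in I, (‖f β‖₊ : ℝ≥0∞) * 1 := by simp
      _ ≤ (∫⁻ β in I, (‖f β‖₊ : ℝ≥0∞) ^ (2:ℝ)) ^ (1/2:ℝ)
          * (∫⁻ β in I, (1:ℝ≥0∞) ^ (2:ℝ)) ^ (1/2:ℝ) :=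
          lintCS (hf.measurable.nnnorm.coe_nnreal_ennreal.aemeasurable) aemeasurable_const
      _ ≤ S2 f * (ENNReal.ofReal (2*L)) ^ (1/2:ℝ) := by
          gcongr
          · exact restrict_le_S2 _ _
          · simp only [ENNReal.one_rpow, lintegral_one, Measure.restrict_apply_univ]
            rw [hvol]
  · -- B3
    rw [nnnorm_mul, ENNReal.coe_mul, mul_comm]
    gcongr
    calc (‖∫ β in I, f β * ((w α:ℂ) - (w β:ℂ))‖₊ : ℝ≥0∞)
        ≤ ∫⁻ β in I, (‖f β * ((w α:ℂ) - (w β:ℂ))‖₊ : ℝ≥0∞) :=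
          enorm_integral_le_lintegral_enorm _
      _ ≤ ∫⁻ β in I, (‖f β‖₊ : ℝ≥0∞) * (S2 (deriv w) * (ENNReal.ofReal |α-β|) ^ (1/2:ℝ)) := by
          refine lintegral_mono (fun β => ?_)
          rw [nnnorm_mul, ENNReal.coe_mul]
          gcongr
          have : (‖((w α:ℂ) - (w β:ℂ))‖₊ : ℝ≥0∞) = ENNReal.ofReal |w α - w β| := by
            rw [← enorm_eq_nnnorm, ← ofReal_norm, ← Complex.ofReal_sub, Complex.norm_real,
              Real.norm_eq_abs]
          rw [this]
          exact hsqw α β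
      _ = ∫⁻ β in I, ((‖f β‖₊ : ℝ≥0∞) * (ENNReal.ofReal |α-β|) ^ (1/2:ℝ)) * S2 (deriv w) :=
          lintegral_congr (fun β => by ring)
      _ = (∫⁻ β in I, (‖f β‖₊ : ℝ≥0∞) * (ENNReal.ofReal |α-β|) ^ (1/2:ℝ)) * S2 (deriv w) := by
          have hm : Measurable fun β : ℝ =>
              (‖f β‖₊ : ℝ≥0∞) * (ENNReal.ofReal |α-β|) ^ (1/2:ℝ) := by
            apply Measurable.mul
            · exact hf.measurable.nnnorm.coe_nnreal_ennreal
            · apply Measurable.pow_const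
              apply Measurable.ennreal_ofReal
              have : Continuous fun x : ℝ => |α - x| := (continuous_const.sub continuous_id).abs
              exact this.measurable
          rw [lintegral_mul_const'' _ hm.aemeasurable.restrict]
      _ ≤ S2 f * S2 (deriv w) * (ENNReal.ofReal (2*L^2)) ^ (1/2:ℝ) := ?_
    have hcs : ∫⁻ β in I, (‖f β‖₊ : ℝ≥0∞) * (ENNReal.ofReal |α-β|) ^ (1/2:ℝ)
        ≤ (∫⁻ β in I, (‖f β‖₊ : ℝ≥0∞) ^ (2:ℝ)) ^ (1/2:ℝ)
          * (∫⁻ β in I, ((ENNReal.ofReal |α-β|) ^ (1/2:ℝ)) ^ (2:ℝ)) ^ (1/2:ℝ) :=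
      lintCS (hf.measurable.nnnorm.coe_nnreal_ennreal.aemeasurable)
        (((Measurable.ennreal_ofReal ((show Continuous fun x : ℝ => |α - x| from
          (continuous_const.sub continuous_id).abs).measurable)).pow_const _).aemeasurable)
    refine le_trans (mul_le_mul_left hcs _) ?_
    have hb : (∫⁻ β in I, ((ENNReal.ofReal |α-β|) ^ (1/2:ℝ)) ^ (2:ℝ))
        ≤ ENNReal.ofReal (2*L^2) := by
      simp_rw [half_sq]
      calc ∫⁻ β in I, ENNReal.ofReal |α-β|
          ≤ ∫⁻ _ in I, ENNReal.ofReal L := by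
            refine setLIntegral_mono measurable_const (fun β hβ => ?_)
            apply ENNReal.ofReal_le_ofReal
            rw [hI] at hβ
            rw [abs_le]; constructor <;> [linarith [hβ.2]; linarith [hβ.1]]
        _ = ENNReal.ofReal L * volume I := by rw [setLIntegral_const]
        _ ≤ ENNReal.ofReal (2*L^2) := by
            rw [hvol, ← ENNReal.ofReal_mul (by positivity)]
            apply ENNReal.ofReal_le_ofReal; nlinarith [hL.le]
    calc (∫⁻ β in I, (‖f β‖₊ : ℝ≥0∞) ^ (2:ℝ)) ^ (1/2:ℝ)
          * (∫⁻ β in I, ((ENNReal.ofReal |α-β|) ^ (1/2:ℝ)) ^ (2:ℝ)) ^ (1/2:ℝ) * S2 (deriv w)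
        ≤ S2 f * (ENNReal.ofReal (2*L^2)) ^ (1/2:ℝ) * S2 (deriv w) :=
          mul_le_mul' (mul_le_mul' (restrict_le_S2 _ _)
            (ENNReal.rpow_le_rpow hb (by norm_num))) le_rfl
      _ = S2 f * S2 (deriv w) * (ENNReal.ofReal (2*L^2)) ^ (1/2:ℝ) := by ring

lemma pointwiseOpt (f g : ℝ → ℂ) (w : ℝ → ℝ) (hf : Continuous f) (hw : ContDiff ℝ 1 w)
    (hsqw : ∀ a b : ℝ, ENNReal.ofReal |w a - w b| ≤
      S2 (deriv w) * (ENNReal.ofReal |a - b|) ^ (1/2:ℝ))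
    (hS : S2 f ≠ ∞) (hS0 : S2 f ≠ 0) (α : ℝ) :
    (‖f α * g α * (w α : ℂ)‖₊ : ℝ≥0∞) ≤
      2 * ((‖g α‖₊ : ℝ≥0∞) * (Dq (fun x => f x * (w x : ℂ)) α) ^ (1/2:ℝ) *
        ((‖g α * (w α : ℂ)‖₊ : ℝ≥0∞) * S2 f)) ^ (1/2:ℝ)
      + (‖g α‖₊ : ℝ≥0∞) * (S2 f * S2 (deriv w)) := by
  by_cases hG : g α * (w α : ℂ) = 0
  · have h0 : f α * g α * (w α : ℂ) = 0 := by
      rw [show f α * g α * (w α:ℂ) = f α * (g α * (w α:ℂ)) by ring, hG, mul_zero]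
    simp [h0]
  apply optL
  · exact ENNReal.mul_ne_top ENNReal.coe_ne_top hS
  · intro _
    apply mul_ne_zero _ hS0
    simpa using hG
  intro t ht
  have hL : (0:ℝ) < 2*t^2 := by positivity
  have h1 := pointwiseL f g w hf hw hsqw α (2*t^2) hL
  have h2L0 : ENNReal.ofReal (2*(2*t^2)) ≠ 0 :=
    ne_of_gt (ENNReal.ofReal_pos.2 (by positivity))
  rw [← ENNReal.mul_le_mul_iff_right h2L0 ENNReal.ofReal_ne_top]
  refine h1.trans ?_
  rw [mul_add, mul_add]
  gcongr ?_ + ?_ + ?_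
  · have e1 : (ENNReal.ofReal (2*(2*t^2)^3)) ^ (1/2:ℝ) = ENNReal.ofReal (4*t^3) := by
      rw [ENNReal.ofReal_rpow_of_nonneg (by positivity) (by norm_num)]
      congr 1
      rw [← Real.sqrt_eq_rpow, show (2*(2*t^2)^3) = (4*t^3)^2 by ring]
      exact Real.sqrt_sq (by positivity)
    rw [e1, show ENNReal.ofReal (4*t^3) = ENNReal.ofReal (2*(2*t^2)) * ENNReal.ofReal t by
      rw [← ENNReal.ofReal_mul (by positivity)]; congr 1; ring]
    exact le_of_eq (by ring)
  · have e2 : (ENNReal.ofReal (2*(2*t^2))) ^ (1/2:ℝ) = ENNReal.ofReal (2*t) := by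
      rw [ENNReal.ofReal_rpow_of_nonneg (by positivity) (by norm_num)]
      congr 1
      rw [← Real.sqrt_eq_rpow, show (2*(2*t^2)) = (2*t)^2 by ring]
      exact Real.sqrt_sq (by positivity)
    rw [e2]
    calc (‖g α * (w α : ℂ)‖₊ : ℝ≥0∞) * S2 f * ENNReal.ofReal (2*t)
        ≤ (‖g α * (w α : ℂ)‖₊ : ℝ≥0∞) * S2 f * (ENNReal.ofReal (2*(2*t^2)) * ENNReal.ofReal t⁻¹) := by
          gcongr
          rw [← ENNReal.ofReal_mul (by positivity)]
          apply ENNReal.ofReal_le_ofReal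
          have e : 2*(2*t^2)*t⁻¹ = 4*t := by field_simp; ring
          rw [e]
          nlinarith
      _ = ENNReal.ofReal (2*(2*t^2)) *
          ((‖g α * (w α : ℂ)‖₊ : ℝ≥0∞) * S2 f * ENNReal.ofReal t⁻¹) := by ring
  · have e3 : (ENNReal.ofReal (2*(2*t^2)^2)) ^ (1/2:ℝ) ≤ ENNReal.ofReal (2*(2*t^2)) := by
      rw [ENNReal.ofReal_rpow_of_nonneg (by positivity) (by norm_num)]
      apply ENNReal.ofReal_le_ofReal
      rw [← Real.sqrt_eq_rpow]
      rw [show (2*(2*t^2)) = Real.sqrt ((2*(2*t^2))^2) from (Real.sqrt_sq (by positivity)).symm]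
      apply Real.sqrt_le_sqrt
      nlinarith
    calc (‖g α‖₊ : ℝ≥0∞) * (S2 f * S2 (deriv w) * (ENNReal.ofReal (2*(2*t^2)^2)) ^ (1/2:ℝ))
        ≤ (‖g α‖₊ : ℝ≥0∞) * (S2 f * S2 (deriv w) * ENNReal.ofReal (2*(2*t^2))) := by gcongr
      _ = ENNReal.ofReal (2*(2*t^2)) * ((‖g α‖₊ : ℝ≥0∞) * (S2 f * S2 (deriv w))) := by ring

lemma addSqLe (p q : ℝ≥0∞) : (p+q)^(2:ℝ) ≤ 4*p^(2:ℝ) + 4*q^(2:ℝ) := by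
  rcases le_total p q with h | h
  · calc (p+q)^(2:ℝ) ≤ (q+q)^(2:ℝ) := by gcongr
      _ = 4*q^(2:ℝ) := by rw [rpow_two_mul, rpow_two_mul]; ring
      _ ≤ 4*p^(2:ℝ) + 4*q^(2:ℝ) := le_add_self
  · calc (p+q)^(2:ℝ) ≤ (p+p)^(2:ℝ) := by gcongr
      _ = 4*p^(2:ℝ) := by rw [rpow_two_mul, rpow_two_mul]; ring
      _ ≤ 4*p^(2:ℝ) + 4*q^(2:ℝ) := le_self_add

lemma master (f g : ℝ → ℂ) (w : ℝ → ℝ) (hf : Continuous f) (hg : Continuous g)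
    (hw : ContDiff ℝ 1 w)
    (hsqw : ∀ a b : ℝ, ENNReal.ofReal |w a - w b| ≤
      S2 (deriv w) * (ENNReal.ofReal |a - b|) ^ (1/2:ℝ))
    (hS : S2 f ≠ ∞) (hS0 : S2 f ≠ 0) :
    S2 (fun α => f α * g α * (w α : ℂ)) ^ (2:ℝ) ≤
      16 * (S2 f * (∫⁻ α, Dq (fun x => f x * (w x : ℂ)) α) ^ (1/2:ℝ) *
        S2 (fun α => g α * g α * (w α : ℂ)))
      + 4 * ((S2 f * S2 (deriv w)) ^ (2:ℝ) * S2 g ^ (2:ℝ)) := by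
  set F : ℝ → ℂ := fun x => f x * (w x : ℂ) with hF
  have hwc : Continuous w := hw.continuous
  have hFc : Continuous F := hf.mul (continuous_ofReal.comp hwc)
  -- measurability of Dq F
  have hDm : Measurable fun α => Dq F α := by
    apply Measurable.lintegral_prod_right'
      (f := fun p : ℝ × ℝ => ENNReal.ofReal (‖F p.1 - F p.2‖ ^ 2 / (p.1 - p.2) ^ 2))
    apply Measurable.ennreal_ofReal
    apply Measurable.div
    · exact (((hFc.comp continuous_fst).sub (hFc.comp continuous_snd)).norm.pow 2).measurable
    · exact ((continuous_fst.sub continuous_snd).pow 2).measurable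
  have key : ∀ α : ℝ, (‖f α * g α * (w α : ℂ)‖₊ : ℝ≥0∞) ^ (2:ℝ) ≤
      16 * (S2 f * ((Dq F α) ^ (1/2:ℝ) * ((‖g α‖₊ : ℝ≥0∞) * (‖g α * (w α : ℂ)‖₊ : ℝ≥0∞))))
      + 4 * ((S2 f * S2 (deriv w)) ^ (2:ℝ) * (‖g α‖₊ : ℝ≥0∞) ^ (2:ℝ)) := by
    intro α
    have h1 := pointwiseOpt f g w hf hw hsqw hS hS0 α
    calc (‖f α * g α * (w α : ℂ)‖₊ : ℝ≥0∞) ^ (2:ℝ)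
        ≤ (2 * ((‖g α‖₊ : ℝ≥0∞) * (Dq F α) ^ (1/2:ℝ) *
            ((‖g α * (w α : ℂ)‖₊ : ℝ≥0∞) * S2 f)) ^ (1/2:ℝ)
          + (‖g α‖₊ : ℝ≥0∞) * (S2 f * S2 (deriv w))) ^ (2:ℝ) :=
          ENNReal.rpow_le_rpow h1 (by norm_num)
      _ ≤ 4 * (2 * ((‖g α‖₊ : ℝ≥0∞) * (Dq F α) ^ (1/2:ℝ) *
            ((‖g α * (w α : ℂ)‖₊ : ℝ≥0∞) * S2 f)) ^ (1/2:ℝ)) ^ (2:ℝ)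
          + 4 * ((‖g α‖₊ : ℝ≥0∞) * (S2 f * S2 (deriv w))) ^ (2:ℝ) := addSqLe _ _
      _ = 16 * (S2 f * ((Dq F α) ^ (1/2:ℝ) * ((‖g α‖₊ : ℝ≥0∞) * (‖g α * (w α : ℂ)‖₊ : ℝ≥0∞))))
          + 4 * ((S2 f * S2 (deriv w)) ^ (2:ℝ) * (‖g α‖₊ : ℝ≥0∞) ^ (2:ℝ)) := by
          rw [ENNReal.mul_rpow_of_nonneg _ _ (by norm_num : (0:ℝ) ≤ 2),
            ENNReal.mul_rpow_of_nonneg _ _ (by norm_num : (0:ℝ) ≤ 2), half_sq]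
          rw [show ((2:ℝ≥0∞)) ^ (2:ℝ) = 4 by rw [rpow_two_mul]; norm_num]
          ring
  calc S2 (fun α => f α * g α * (w α : ℂ)) ^ (2:ℝ)
      = ∫⁻ α, (‖f α * g α * (w α : ℂ)‖₊ : ℝ≥0∞) ^ (2:ℝ) := by rw [S2_eq, half_sq]
    _ ≤ ∫⁻ α, (16 * (S2 f * ((Dq F α) ^ (1/2:ℝ) *
          ((‖g α‖₊ : ℝ≥0∞) * (‖g α * (w α : ℂ)‖₊ : ℝ≥0∞))))
        + 4 * ((S2 f * S2 (deriv w)) ^ (2:ℝ) * (‖g α‖₊ : ℝ≥0∞) ^ (2:ℝ))) :=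
        lintegral_mono key
    _ = 16 * S2 f * (∫⁻ α, (Dq F α) ^ (1/2:ℝ) *
          ((‖g α‖₊ : ℝ≥0∞) * (‖g α * (w α : ℂ)‖₊ : ℝ≥0∞)))
        + 4 * (S2 f * S2 (deriv w)) ^ (2:ℝ) * (∫⁻ α, (‖g α‖₊ : ℝ≥0∞) ^ (2:ℝ)) := by
        have hgm : Measurable fun α => (‖g α‖₊ : ℝ≥0∞) := hg.measurable.nnnorm.coe_nnreal_ennreal
        have hgwm : Measurable fun α => (‖g α * (w α:ℂ)‖₊ : ℝ≥0∞) :=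
          (hg.mul (continuous_ofReal.comp hwc)).measurable.nnnorm.coe_nnreal_ennreal
        have hXm : Measurable fun α => (Dq F α) ^ (1/2:ℝ) *
            ((‖g α‖₊:ℝ≥0∞) * (‖g α * (w α:ℂ)‖₊:ℝ≥0∞)) := (hDm.pow_const _).mul (hgm.mul hgwm)
        rw [lintegral_add_left ((hXm.const_mul (S2 f)).const_mul 16)]
        congr 1
        · rw [lintegral_const_mul 16 (hXm.const_mul (S2 f)), lintegral_const_mul (S2 f) hXm]
          ring
        · rw [lintegral_const_mul 4 ((hgm.pow_const _).const_mul _),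
            lintegral_const_mul _ (hgm.pow_const _)]
          ring
    _ ≤ 16 * (S2 f * (∫⁻ α, Dq F α) ^ (1/2:ℝ) * S2 (fun α => g α * g α * (w α : ℂ)))
        + 4 * ((S2 f * S2 (deriv w)) ^ (2:ℝ) * S2 g ^ (2:ℝ)) := by
        have hgm : Measurable fun α => (‖g α‖₊ : ℝ≥0∞) := hg.measurable.nnnorm.coe_nnreal_ennreal
        have hgwm : Measurable fun α => (‖g α * (w α:ℂ)‖₊ : ℝ≥0∞) :=
          (hg.mul (continuous_ofReal.comp hwc)).measurable.nnnorm.coe_nnreal_ennreal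
        have hB : ∫⁻ α, (‖g α‖₊:ℝ≥0∞)^(2:ℝ) = S2 g ^ (2:ℝ) := by rw [S2_eq, half_sq]
        have hA : (∫⁻ α, (Dq F α) ^ (1/2:ℝ) *
            ((‖g α‖₊:ℝ≥0∞) * (‖g α * (w α:ℂ)‖₊:ℝ≥0∞)))
            ≤ (∫⁻ α, Dq F α) ^ (1/2:ℝ) * S2 (fun α => g α * g α * (w α : ℂ)) := by
          refine (lintCS (hDm.pow_const _).aemeasurable (hgm.mul hgwm).aemeasurable).trans ?_
          have e1 : ∫⁻ α, ((Dq F α) ^ (1/2:ℝ)) ^ (2:ℝ) = ∫⁻ α, Dq F α := by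
            apply lintegral_congr; intro α; rw [half_sq]
          have e2 : (∫⁻ α, ((‖g α‖₊:ℝ≥0∞) * (‖g α * (w α:ℂ)‖₊:ℝ≥0∞)) ^ (2:ℝ)) ^ (1/2:ℝ)
              = S2 (fun α => g α * g α * (w α : ℂ)) := by
            rw [S2_eq]
            congr 1
            apply lintegral_congr; intro α
            congr 1
            rw [← ENNReal.coe_mul, ← nnnorm_mul]
            congr 1
            ring
          simp only [Pi.mul_apply]
          rw [e1, e2]
        rw [hB]
        calc 16 * S2 f * (∫⁻ α, (Dq F α) ^ (1/2:ℝ) *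
              ((‖g α‖₊:ℝ≥0∞) * (‖g α * (w α:ℂ)‖₊:ℝ≥0∞)))
            + 4 * (S2 f * S2 (deriv w)) ^ (2:ℝ) * S2 g ^ (2:ℝ)
            ≤ 16 * S2 f * ((∫⁻ α, Dq F α) ^ (1/2:ℝ) * S2 (fun α => g α * g α * (w α : ℂ)))
            + 4 * (S2 f * S2 (deriv w)) ^ (2:ℝ) * S2 g ^ (2:ℝ) := by gcongr
          _ = 16 * (S2 f * (∫⁻ α, Dq F α) ^ (1/2:ℝ) * S2 (fun α => g α * g α * (w α : ℂ)))
            + 4 * ((S2 f * S2 (deriv w)) ^ (2:ℝ) * S2 g ^ (2:ℝ)) := by ring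

-- Schwartz functions are in L^2
lemma schwartz_S2_ne_top (f : SchwartzMap ℝ ℂ) : S2 (⇑f) ≠ ∞ := by
  obtain ⟨M, hM0, hM⟩ := f.decay 0 0
  have hb : ∀ x : ℝ, ‖f x‖ ≤ M := by
    intro x
    have := hM x
    simpa [norm_iteratedFDeriv_zero] using this
  rw [S2_eq]
  intro htop
  have h1 : ∫⁻ a, (‖f a‖₊ : ℝ≥0∞) ^ (2:ℝ) ≤ ENNReal.ofReal M * ∫⁻ a, (‖f a‖₊ : ℝ≥0∞) := by
    rw [← lintegral_const_mul _ (f.continuous.measurable.nnnorm.coe_nnreal_ennreal)]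
    refine lintegral_mono (fun a => ?_)
    rw [rpow_two_mul]
    apply mul_le_mul_left
    rw [← enorm_eq_nnnorm, ← ofReal_norm]
    exact ENNReal.ofReal_le_ofReal (hb a)
  have h2 : ∫⁻ a, (‖f a‖₊ : ℝ≥0∞) < ∞ := (f.integrable (μ := volume)).2
  have h3 : ENNReal.ofReal M * ∫⁻ a, (‖f a‖₊ : ℝ≥0∞) < ∞ :=
    ENNReal.mul_lt_top ENNReal.ofReal_lt_top h2
  have h4 : ((∫⁻ a, (‖f a‖₊ : ℝ≥0∞) ^ (2:ℝ)) : ℝ≥0∞) < ∞ := lt_of_le_of_lt h1 h3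
  rw [ENNReal.rpow_eq_top_iff] at htop
  rcases htop with ⟨_, h⟩ | ⟨h, _⟩
  · norm_num at h
  · exact absurd h h4.ne

-- finiteness of S2 (g * g * w)
lemma ggw_ne_top (g : SchwartzMap ℝ ℂ) (w : ℝ → ℝ) (A : ℝ) (hA : ∀ α, |w α| ≤ A) :
    S2 (fun α => g α * g α * (w α : ℂ)) ≠ ∞ := by
  obtain ⟨M, hM0, hM⟩ := g.decay 0 0
  have hb : ∀ x : ℝ, ‖g x‖ ≤ M := by
    intro x
    have := hM x
    simpa [norm_iteratedFDeriv_zero] using this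
  have hA0 : 0 ≤ A := le_trans (abs_nonneg _) (hA 0)
  have hmono : ∀ α : ℝ, ‖g α * g α * (w α : ℂ)‖ ≤ (M * A) * ‖g α‖ := by
    intro α
    rw [norm_mul, norm_mul, Complex.norm_real, Real.norm_eq_abs]
    calc ‖g α‖ * ‖g α‖ * |w α| ≤ M * ‖g α‖ * A := by
          apply mul_le_mul _ (hA α) (abs_nonneg _) (by positivity)
          exact mul_le_mul_of_nonneg_right (hb α) (norm_nonneg _)
      _ = (M * A) * ‖g α‖ := by ring
  have h1 : S2 (fun α => g α * g α * (w α : ℂ)) ≤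
      eLpNorm (fun α => (M*A) * ‖g α‖) 2 volume := by
    apply eLpNorm_mono
    intro x
    exact (hmono x).trans (le_abs_self _)
  have h2 : eLpNorm (fun α => (M*A) * ‖g α‖) 2 volume
      = ‖(M*A)‖₊ * eLpNorm (fun α => ‖g α‖) 2 volume := by
    have := eLpNorm_const_smul (μ := volume) (p := (2:ℝ≥0∞)) ((M*A) : ℝ)
      (fun α : ℝ => ‖g α‖)
    rw [show (fun α => (M*A) * ‖g α‖) = (M*A) • (fun α : ℝ => ‖g α‖) from rfl, this]
    rfl
  intro htop
  rw [htop] at h1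
  rw [top_le_iff] at h1
  rw [h1, eLpNorm_norm] at h2
  exact absurd h2.symm (ENNReal.mul_ne_top ENNReal.coe_ne_top (schwartz_S2_ne_top g))

-- relation between lintegral of Dq and Hhalf
lemma dq_le_Hhalf (u : ℝ → ℂ) :
    (∫⁻ α, Dq u α) ^ (1/2:ℝ) ≤ ENNReal.ofReal 3 * Hhalf u := by
  set c := ENNReal.ofReal (1 / (2 * Real.pi)) with hc
  have hpi := Real.pi_pos
  have hc0 : c ≠ 0 := ne_of_gt (ENNReal.ofReal_pos.2 (by positivity))
  have e : (∫⁻ α, Dq u α) = c⁻¹ * (c * ∫⁻ α, Dq u α) := by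
    rw [← mul_assoc, ENNReal.inv_mul_cancel hc0 ENNReal.ofReal_ne_top, one_mul]
  rw [e, ENNReal.mul_rpow_of_nonneg _ _ (by norm_num)]
  have h1 : (c⁻¹) ^ (1/2:ℝ) ≤ ENNReal.ofReal 3 := by
    rw [hc, ← ENNReal.ofReal_inv_of_pos (by positivity),
      ENNReal.ofReal_rpow_of_nonneg (by positivity) (by norm_num)]
    apply ENNReal.ofReal_le_ofReal
    rw [← Real.sqrt_eq_rpow]
    have h9 : (1 / (2 * Real.pi))⁻¹ ≤ 9 := by
      rw [one_div, inv_inv]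
      nlinarith [Real.pi_le_four]
    calc Real.sqrt (1 / (2 * Real.pi))⁻¹ ≤ Real.sqrt 9 := Real.sqrt_le_sqrt h9
      _ = 3 := by
        rw [show (9:ℝ) = 3^2 by norm_num, Real.sqrt_sq (by norm_num)]
  refine mul_le_mul' h1 ?_
  rw [Hhalf]
  rfl


/-- there is a universal `C > 0` so that for Schwartz `f, g` and every
bounded real-valued `C¹` function `w` with `w' ∈ L²`,
`‖fgw‖_{L²} ≤ C(‖fw‖_{Ḣ^{1/2}}‖g‖_{L²} + ‖gw‖_{Ḣ^{1/2}}‖f‖_{L²} + ‖f‖_{L²}‖g‖_{L²}‖w'‖_{L²})`. -/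
theorem statement16 : ∃ C : ℝ, 0 < C ∧
    ∀ (f g : SchwartzMap ℝ ℂ) (w : ℝ → ℝ),
      ContDiff ℝ 1 w → (∃ A : ℝ, ∀ α : ℝ, |w α| ≤ A) →
      MemLp (deriv w) 2 volume →
      eLpNorm (fun α : ℝ => f α * g α * ((w α : ℝ) : ℂ)) 2 volume
        ≤ ENNReal.ofReal C *
            (Hhalf (fun α : ℝ => f α * ((w α : ℝ) : ℂ)) * eLpNorm (⇑g) 2 volume
              + Hhalf (fun α : ℝ => g α * ((w α : ℝ) : ℂ)) * eLpNorm (⇑f) 2 volume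
              + eLpNorm (⇑f) 2 volume * eLpNorm (⇑g) 2 volume *
                  eLpNorm (deriv w) 2 volume) := by
  refine ⟨48, by norm_num, ?_⟩
  intro f g w hw hab _hmem
  obtain ⟨A, hA⟩ := hab
  by_cases hf0 : S2 (⇑f) = 0
  · have hfe : ⇑f =ᵐ[volume] 0 :=
      (eLpNorm_eq_zero_iff f.continuous.aestronglyMeasurable (by norm_num)).1 hf0
    have hze : (fun α : ℝ => f α * g α * ((w α : ℝ) : ℂ)) =ᵐ[volume] 0 := by
      filter_upwards [hfe] with α hα
      simp only [Pi.zero_apply] at hα ⊢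
      rw [hα]; ring
    rw [eLpNorm_congr_ae hze, eLpNorm_zero]
    exact zero_le
  by_cases hg0 : S2 (⇑g) = 0
  · have hge : ⇑g =ᵐ[volume] 0 :=
      (eLpNorm_eq_zero_iff g.continuous.aestronglyMeasurable (by norm_num)).1 hg0
    have hze : (fun α : ℝ => f α * g α * ((w α : ℝ) : ℂ)) =ᵐ[volume] 0 := by
      filter_upwards [hge] with α hα
      simp only [Pi.zero_apply] at hα ⊢
      rw [hα]; ring
    rw [eLpNorm_congr_ae hze, eLpNorm_zero]
    exact zero_le
  have hsqw : ∀ a b : ℝ, ENNReal.ofReal |w a - w b| ≤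
      S2 (deriv w) * (ENNReal.ofReal |a - b|) ^ (1/2:ℝ) := sqw hw
  have hNf := schwartz_S2_ne_top f
  have hNg := schwartz_S2_ne_top g
  have hX_ne := ggw_ne_top g w A hA
  have hM1 := master (⇑f) (⇑g) w f.continuous g.continuous hw hsqw hNf hf0
  have hM2 := master (⇑g) (⇑g) w g.continuous g.continuous hw hsqw hNg hg0
  set Nf := S2 (⇑f) with hNfd
  set Ng := S2 (⇑g) with hNgd
  set Nw := S2 (deriv w) with hNwd
  set DF := (∫⁻ α, Dq (fun x => f x * ((w x : ℝ) : ℂ)) α) ^ (1/2:ℝ) with hDFd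
  set DG := (∫⁻ α, Dq (fun x => g x * ((w x : ℝ) : ℂ)) α) ^ (1/2:ℝ) with hDGd
  set X := S2 (fun α => g α * g α * ((w α : ℝ) : ℂ)) with hXd
  set N := S2 (fun α => f α * g α * ((w α : ℝ) : ℂ)) with hNd
  have hM2' : X ^ (2:ℝ) ≤ (16 * (Ng * DG)) * X + 4 * ((Ng * Nw) ^ (2:ℝ) * Ng ^ (2:ℝ)) := by
    refine hM2.trans (le_of_eq ?_)
    ring
  have hXb : X ≤ 16 * (Ng * DG) + 2 * ((Ng * Nw) * Ng) := by
    have h := quad hX_ne hM2'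
    rwa [four_sq_half] at h
  have hDF3 : DF ≤ ENNReal.ofReal 3 * Hhalf (fun α : ℝ => f α * ((w α : ℝ) : ℂ)) :=
    dq_le_Hhalf _
  have hDG3 : DG ≤ ENNReal.ofReal 3 * Hhalf (fun α : ℝ => g α * ((w α : ℝ) : ℂ)) :=
    dq_le_Hhalf _
  set H1 := Hhalf (fun α : ℝ => f α * ((w α : ℝ) : ℂ)) with hH1d
  set H2 := Hhalf (fun α : ℝ => g α * ((w α : ℝ) : ℂ)) with hH2d
  set T : ℝ≥0∞ := H1 * Ng + H2 * Nf + Nf * Ng * Nw with hTd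
  have key : N ^ (2:ℝ) ≤ 2304 * (T * T) := by
    calc N ^ (2:ℝ)
        ≤ 16 * (Nf * DF * X) + 4 * ((Nf * Nw) ^ (2:ℝ) * Ng ^ (2:ℝ)) := hM1
      _ ≤ 16 * (Nf * (ENNReal.ofReal 3 * H1) * (16 * (Ng * (ENNReal.ofReal 3 * H2))
            + 2 * ((Ng * Nw) * Ng))) + 4 * ((Nf * Nw) ^ (2:ℝ) * Ng ^ (2:ℝ)) := by
          gcongr
          exact hXb.trans (by gcongr)
      _ = 2304 * ((H1 * Ng) * (H2 * Nf)) + 96 * ((H1 * Ng) * (Nf * Ng * Nw))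
            + 4 * ((Nf * Ng * Nw) * (Nf * Ng * Nw)) := by
          rw [rpow_two_mul, rpow_two_mul,
            show ENNReal.ofReal 3 = (3:ℝ≥0∞) by norm_num]
          ring
      _ ≤ 2304 * ((H1 * Ng) * (H2 * Nf)) + 2304 * ((H1 * Ng) * (Nf * Ng * Nw))
            + 2304 * ((Nf * Ng * Nw) * (Nf * Ng * Nw)) := by gcongr <;> norm_num
      _ = 2304 * ((H1 * Ng) * (H2 * Nf) + (H1 * Ng) * (Nf * Ng * Nw)
            + (Nf * Ng * Nw) * (Nf * Ng * Nw)) := by ring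
      _ ≤ 2304 * (T * T) := by
          gcongr
          calc (H1 * Ng) * (H2 * Nf) + (H1 * Ng) * (Nf * Ng * Nw)
                + (Nf * Ng * Nw) * (Nf * Ng * Nw)
              = (H1 * Ng) * (H2 * Nf + Nf * Ng * Nw)
                + (Nf * Ng * Nw) * (Nf * Ng * Nw) := by ring
            _ ≤ (H1 * Ng) * T + (Nf * Ng * Nw) * T := by
                gcongr
                · rw [hTd]
                  calc H2 * Nf + Nf * Ng * Nw ≤ H1 * Ng + (H2 * Nf + Nf * Ng * Nw) :=
                        le_add_self
                    _ = H1 * Ng + H2 * Nf + Nf * Ng * Nw := by ring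
                · rw [hTd]
                  exact le_add_self
            _ = ((H1 * Ng) + (Nf * Ng * Nw)) * T := by ring
            _ ≤ T * T := by
                gcongr
                rw [hTd]
                calc H1 * Ng + Nf * Ng * Nw ≤ H1 * Ng + (H2 * Nf + Nf * Ng * Nw) := by
                      gcongr; exact le_add_self
                  _ = H1 * Ng + H2 * Nf + Nf * Ng * Nw := by ring
  have key2 : N ^ (2:ℝ) ≤ (ENNReal.ofReal 48 * T) ^ (2:ℝ) := by
    refine key.trans (le_of_eq ?_)
    rw [rpow_two_mul, show ENNReal.ofReal 48 = (48:ℝ≥0∞) by norm_num]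
    ring
  have key3 : N ≤ ENNReal.ofReal 48 * T := by
    have h := ENNReal.rpow_le_rpow key2 (by norm_num : (0:ℝ) ≤ 1/2)
    rwa [sq_half, sq_half] at h
  calc eLpNorm (fun α : ℝ => f α * g α * ((w α : ℝ) : ℂ)) 2 volume
      = N := rfl
    _ ≤ ENNReal.ofReal 48 * T := key3
    _ = ENNReal.ofReal 48 * (H1 * eLpNorm (⇑g) 2 volume + H2 * eLpNorm (⇑f) 2 volume
          + eLpNorm (⇑f) 2 volume * eLpNorm (⇑g) 2 volume * eLpNorm (deriv w) 2 volume) := rfl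
end
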